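/- arXiv:1912.12498 — 3 statements merged into one kernel-verified Lean document; each statement's English description precedes it below -/
import Mathlib

section
/- Let φ₁ and φ₂ be mild solutions with matrix A and initial data φ₁,₀, φ₂,₀ ∈ Φ. Let p > 0 and let u : ℝ^d × [0,∞) → [0,∞) be continuous, with sup_k u(k,t)/(1+|k|^p) < ∞ for each t, and satisfying the supersolution inequality u(k,t) ≥ e^{-t} |φ₁,₀ − φ₂,₀|(e^{-tA}k) + ∫₀ᵗ e^{-(t-τ)} L[u(·,τ)](e^{-(t-τ)A}k) dτ for all k ∈ ℝ^d and t ≥ 0. Then |φ₁(k,t) − φ₂(k,t)| ≤ u(k,t) for all k ∈ ℝ^d and t ≥ 0. -/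
open MeasureTheory
open scoped Classical Matrix
noncomputable section

/-- ℝ^d with the Euclidean structure. -/
abbrev Rd (d : ℕ) := EuclideanSpace ℝ (Fin d)

/-- The unit sphere S^{d-1} in ℝ^d. -/
abbrev Sd (d : ℕ) := Metric.sphere (0 : Rd d) 1

/-- The surface measure on the unit sphere. -/
noncomputable def sphMeasure (d : ℕ) : Measure (Sd d) :=
  (volume : Measure (Rd d)).toSphere

/-- k₊ = (k + |k| n)/2. -/
noncomputable def kplus {d : ℕ} (k : Rd d) (n : Sd d) : Rd d :=
  (2⁻¹ : ℝ) • (k + ‖k‖ • (n : Rd d))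

/-- k₋ = (k − |k| n)/2. -/
noncomputable def kminus {d : ℕ} (k : Rd d) (n : Sd d) : Rd d :=
  (2⁻¹ : ℝ) • (k - ‖k‖ • (n : Rd d))

/-- k̂·n for k ≠ 0. -/
noncomputable def khatDot {d : ℕ} (k : Rd d) (n : Sd d) : ℝ :=
  inner ℝ (‖k‖⁻¹ • k) (n : Rd d)

/-- The gain operator I⁺(φ,ψ). -/
noncomputable def Iplus {d : ℕ} (g : ℝ → ℝ) (φ ψ : Rd d → ℂ) (k : Rd d) : ℂ :=
  if k = 0 then φ 0 * ψ 0
  else ∫ n, (g (khatDot k n) : ℂ) * φ (kplus k n) * ψ (kminus k n) ∂(sphMeasure d)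

/-- Γ[φ] = I⁺(φ,φ). -/
noncomputable def Gam {d : ℕ} (g : ℝ → ℝ) (φ : Rd d → ℂ) : Rd d → ℂ :=
  Iplus g φ φ

/-- The linearized operator L, complex-valued version. -/
noncomputable def LopC {d : ℕ} (g : ℝ → ℝ) (ψ : Rd d → ℂ) (k : Rd d) : ℂ :=
  if k = 0 then 2 * ψ 0
  else ∫ n, (g (khatDot k n) : ℂ) * (ψ (kplus k n) + ψ (kminus k n)) ∂(sphMeasure d)

/-- The linearized operator L, real-valued version. -/
noncomputable def LopR {d : ℕ} (g : ℝ → ℝ) (ψ : Rd d → ℝ) (k : Rd d) : ℝ :=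
  if k = 0 then 2 * ψ 0
  else ∫ n, g (khatDot k n) * (ψ (kplus k n) + ψ (kminus k n)) ∂(sphMeasure d)

/-- The Fourier transform (characteristic function) of a measure. -/
noncomputable def charFun {d : ℕ} (μ : Measure (Rd d)) (k : Rd d) : ℂ :=
  ∫ v, Complex.exp (-(Complex.I * ((inner ℝ k v : ℝ) : ℂ))) ∂μ

/-- φ is the characteristic function of a Borel probability measure on ℝ^d. -/
def IsCharFun {d : ℕ} (φ : Rd d → ℂ) : Prop :=
  ∃ μ : Measure (Rd d), IsProbabilityMeasure μ ∧ φ = _root_.charFun μ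

/-- A matrix acting on ℝ^d as a continuous linear map. -/
noncomputable def matCLM {d : ℕ} (A : Matrix (Fin d) (Fin d) ℝ) : Rd d →L[ℝ] Rd d :=
  LinearMap.toContinuousLinearMap (Matrix.toEuclideanLin A)

/-- The operator norm ‖A‖ = sup_{|k|=1} |Ak|. -/
noncomputable def opN {d : ℕ} (A : Matrix (Fin d) (Fin d) ℝ) : ℝ := ‖matCLM A‖

/-- e^{tA} k, matrix exponential applied to a vector. -/
noncomputable def expA {d : ℕ} (A : Matrix (Fin d) (Fin d) ℝ) (t : ℝ) (k : Rd d) : Rd d :=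
  matCLM (NormedSpace.exp (t • A)) k

/-- A mild solution of the Fourier-transformed equation ∂ₜφ + φ + (Ak)·∂ₖφ = Γ[φ]. -/
def IsMildSolution {d : ℕ} (g : ℝ → ℝ) (A : Matrix (Fin d) (Fin d) ℝ)
    (φ₀ : Rd d → ℂ) (φ : ℝ → Rd d → ℂ) : Prop :=
  (∀ t, 0 ≤ t → IsCharFun (φ t)) ∧
  (∀ t, 0 ≤ t → ∀ ε > (0:ℝ), ∃ δ > (0:ℝ), ∀ s, 0 ≤ s → |s - t| < δ →
      ∀ k, ‖φ s k - φ t k‖ ≤ ε) ∧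
  (∀ t, 0 ≤ t → ∀ k, φ t k =
      (Real.exp (-t) : ℂ) * φ₀ (expA A (-t) k)
        + ∫ τ in (0:ℝ)..t, (Real.exp (-(t - τ)) : ℂ) * Gam g (φ τ) (expA A (-(t - τ)) k))


open scoped RealInnerProductSpace
section Aux0
instance sphMeasure_finite (d : ℕ) : IsFiniteMeasure (sphMeasure d) := by
  unfold sphMeasure; infer_instance
end Aux0
section AuxA
variable {d : ℕ}

lemma matCLM_apply (A : Matrix (Fin d) (Fin d) ℝ) (x : Rd d) :
    matCLM A x = Matrix.toEuclideanCLM (𝕜 := ℝ) A x := rfl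

lemma matCLM_cont : Continuous fun A : Matrix (Fin d) (Fin d) ℝ =>
    Matrix.toEuclideanCLM (𝕜 := ℝ) A := by
  let f : Matrix (Fin d) (Fin d) ℝ →ₗ[ℝ] (Rd d →L[ℝ] Rd d) :=
    { toFun := fun A => Matrix.toEuclideanCLM (𝕜 := ℝ) A,
      map_add' := fun a b => map_add _ a b,
      map_smul' := fun c a => map_smul _ c a }
  exact f.continuous_of_finiteDimensional

lemma expA_neg_expA (A : Matrix (Fin d) (Fin d) ℝ) (s : ℝ) (k : Rd d) :
    expA A (-s) (expA A s k) = k := by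
  rw [expA, expA, matCLM_apply, matCLM_apply, ← ContinuousLinearMap.comp_apply,
    ← ContinuousLinearMap.mul_def, ← map_mul, ← Matrix.exp_add_of_commute _ _
      ((Commute.refl A).smul_left (-s) |>.smul_right s),
    neg_smul, neg_add_cancel, NormedSpace.exp_zero, map_one, ContinuousLinearMap.one_apply]

lemma expA_ne_zero (A : Matrix (Fin d) (Fin d) ℝ) (s : ℝ) {k : Rd d} (hk : k ≠ 0) :
    expA A s k ≠ 0 := by
  intro h
  apply hk
  have h2 := expA_neg_expA A s k
  rw [h, expA, map_zero] at h2
  exact h2.symm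

lemma expA_zero_vec (A : Matrix (Fin d) (Fin d) ℝ) (s : ℝ) : expA A s (0 : Rd d) = 0 :=
  map_zero _

lemma matrix_exp_cont : Continuous fun B : Matrix (Fin d) (Fin d) ℝ => NormedSpace.exp B := by
  letI : SeminormedRing (Matrix (Fin d) (Fin d) ℝ) := Matrix.linftyOpSemiNormedRing
  letI : NormedRing (Matrix (Fin d) (Fin d) ℝ) := Matrix.linftyOpNormedRing
  letI : NormedAlgebra ℝ (Matrix (Fin d) (Fin d) ℝ) := Matrix.linftyOpNormedAlgebra
  exact continuous_iff_continuousAt.2 fun x => (NormedSpace.exp_analytic (𝕂 := ℝ) x).continuousAt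

lemma expA_cont (A : Matrix (Fin d) (Fin d) ℝ) (t : ℝ) (k : Rd d) :
    Continuous fun τ : ℝ => expA A (-(t - τ)) k := by
  simp only [expA, matCLM_apply]
  have h1 : Continuous fun τ : ℝ => Matrix.toEuclideanCLM (𝕜 := ℝ)
      (NormedSpace.exp ((-(t - τ)) • A)) :=
    matCLM_cont.comp <| matrix_exp_cont.comp <|
      ((continuous_const.sub continuous_id).neg).smul continuous_const
  exact h1.clm_apply continuous_const

end AuxA
section AuxB
variable {d : ℕ}

lemma norm_exp_neg_I_mul (r : ℝ) : ‖Complex.exp (-(Complex.I * (r : ℂ)))‖ = 1 := by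
  rw [Complex.norm_exp]
  simp

lemma charFun_norm_le_one (μ : Measure (Rd d)) [IsProbabilityMeasure μ] (k : Rd d) :
    ‖_root_.charFun μ k‖ ≤ 1 := by
  rw [_root_.charFun]
  refine (norm_integral_le_integral_norm _).trans ?_
  simp only [norm_exp_neg_I_mul]
  simp

lemma charFun_continuous (μ : Measure (Rd d)) [IsProbabilityMeasure μ] :
    Continuous (_root_.charFun μ) := by
  apply continuous_of_dominated (bound := fun _ => (1 : ℝ))
  · intro k
    apply Continuous.aestronglyMeasurable
    exact Complex.continuous_exp.comp <|
      (continuous_const.mul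
        (Complex.continuous_ofReal.comp (continuous_const.inner continuous_id))).neg
  · intro k
    filter_upwards with v
    rw [norm_exp_neg_I_mul]
  · exact integrable_const _
  · filter_upwards with v
    exact Complex.continuous_exp.comp <|
      (continuous_const.mul
        (Complex.continuous_ofReal.comp (continuous_id.inner continuous_const))).neg

lemma IsCharFun.norm_le_one {φ : Rd d → ℂ} (h : IsCharFun φ) (k : Rd d) : ‖φ k‖ ≤ 1 := by
  obtain ⟨μ, hμ, rfl⟩ := h
  exact charFun_norm_le_one μ k

lemma IsCharFun.continuous {φ : Rd d → ℂ} (h : IsCharFun φ) : Continuous φ := by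
  obtain ⟨μ, hμ, rfl⟩ := h
  exact charFun_continuous μ

lemma norm_coe_sphere (n : Sd d) : ‖(n : Rd d)‖ = 1 := by
  have := n.2
  rwa [mem_sphere_zero_iff_norm] at this

lemma norm_kplus_le (k : Rd d) (n : Sd d) : ‖kplus k n‖ ≤ ‖k‖ := by
  rw [kplus, norm_smul]
  calc ‖(2⁻¹ : ℝ)‖ * ‖k + ‖k‖ • (n : Rd d)‖ ≤ 2⁻¹ * (‖k‖ + ‖‖k‖ • (n : Rd d)‖) := by
        rw [norm_inv, Real.norm_ofNat]
        exact mul_le_mul_of_nonneg_left (norm_add_le _ _) (by norm_num)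
    _ ≤ ‖k‖ := by
        rw [norm_smul, norm_coe_sphere, norm_norm, mul_one]
        ring_nf
        linarith [norm_nonneg k]

lemma norm_kminus_le (k : Rd d) (n : Sd d) : ‖kminus k n‖ ≤ ‖k‖ := by
  rw [kminus, norm_smul]
  calc ‖(2⁻¹ : ℝ)‖ * ‖k - ‖k‖ • (n : Rd d)‖ ≤ 2⁻¹ * (‖k‖ + ‖‖k‖ • (n : Rd d)‖) := by
        rw [norm_inv, Real.norm_ofNat]
        exact mul_le_mul_of_nonneg_left (norm_sub_le _ _) (by norm_num)
    _ ≤ ‖k‖ := by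
        rw [norm_smul, norm_coe_sphere, norm_norm, mul_one]
        ring_nf
        linarith [norm_nonneg k]

lemma khatDot_cont {X : Type*} [TopologicalSpace X] {f : X → Rd d} (hf : Continuous f)
    (h0 : ∀ x, f x ≠ 0) : Continuous fun q : X × Sd d => khatDot (f q.1) q.2 := by
  unfold khatDot
  exact Continuous.inner
    ((((hf.comp continuous_fst).norm.inv₀
        (fun q => norm_ne_zero_iff.mpr (h0 q.1))).smul (hf.comp continuous_fst)))
    (continuous_subtype_val.comp continuous_snd)

lemma kplus_cont {X : Type*} [TopologicalSpace X] {f : X → Rd d} (hf : Continuous f) :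
    Continuous fun q : X × Sd d => kplus (f q.1) q.2 := by
  unfold kplus
  exact (((hf.comp continuous_fst).add
    ((hf.comp continuous_fst).norm.smul
      (continuous_subtype_val.comp continuous_snd)))).const_smul (2⁻¹ : ℝ)

lemma kminus_cont {X : Type*} [TopologicalSpace X] {f : X → Rd d} (hf : Continuous f) :
    Continuous fun q : X × Sd d => kminus (f q.1) q.2 := by
  unfold kminus
  exact (((hf.comp continuous_fst).sub
    ((hf.comp continuous_fst).norm.smul
      (continuous_subtype_val.comp continuous_snd)))).const_smul (2⁻¹ : ℝ)

end AuxB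
section AuxC
variable {d : ℕ} {g : ℝ → ℝ}

lemma khatDot_cont_snd (k : Rd d) : Continuous fun n : Sd d => khatDot k n := by
  unfold khatDot
  exact continuous_const.inner continuous_subtype_val

lemma g_meas_sphere (hg : Measurable g) (k : Rd d) :
    Measurable fun n : Sd d => g (khatDot k n) :=
  hg.comp (khatDot_cont_snd k).measurable

lemma g_integral_one
    (hg_norm : ∀ ω : Rd d, ‖ω‖ = 1 → ∫ n, g (inner ℝ ω (n : Rd d)) ∂(sphMeasure d) = 1)
    {k : Rd d} (hk : k ≠ 0) :
    ∫ n, g (khatDot k n) ∂(sphMeasure d) = 1 := by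
  have hω : ‖(‖k‖⁻¹ • k)‖ = 1 := by
    rw [norm_smul, norm_inv, norm_norm, inv_mul_cancel₀ (norm_ne_zero_iff.mpr hk)]
  exact hg_norm _ hω

lemma g_integrable
    (hg_norm : ∀ ω : Rd d, ‖ω‖ = 1 → ∫ n, g (inner ℝ ω (n : Rd d)) ∂(sphMeasure d) = 1)
    {k : Rd d} (hk : k ≠ 0) :
    Integrable (fun n => g (khatDot k n)) (sphMeasure d) := by
  by_contra h
  have h1 := g_integral_one hg_norm hk
  rw [integral_undef h] at h1
  norm_num at h1

end AuxC
section AuxD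
variable {d : ℕ} {g : ℝ → ℝ}

lemma norm_g_mul_le {r : ℝ} (hg0 : 0 ≤ r) {a b : ℂ} (ha : ‖a‖ ≤ 1) (hb : ‖b‖ ≤ 1) :
    ‖(r : ℂ) * a * b‖ ≤ r := by
  rw [norm_mul, norm_mul, Complex.norm_real, Real.norm_of_nonneg hg0]
  calc r * ‖a‖ * ‖b‖ ≤ r * 1 * 1 := by
        apply mul_le_mul (mul_le_mul le_rfl ha (norm_nonneg a) hg0) hb (norm_nonneg b)
        positivity
    _ = r := by ring

lemma iplus_integrand_integrable (hg_meas : Measurable g)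
    (hg_nonneg : ∀ x, 0 ≤ g x)
    (hg_norm : ∀ ω : Rd d, ‖ω‖ = 1 → ∫ n, g (inner ℝ ω (n : Rd d)) ∂(sphMeasure d) = 1)
    {φ ψ : Rd d → ℂ} (hφn : ∀ x, ‖φ x‖ ≤ 1) (hψn : ∀ x, ‖ψ x‖ ≤ 1)
    (hφc : Continuous φ) (hψc : Continuous ψ) {k : Rd d} (hk : k ≠ 0) :
    Integrable (fun n => (g (khatDot k n) : ℂ) * φ (kplus k n) * ψ (kminus k n))
      (sphMeasure d) := by
  refine Integrable.mono' (g_integrable hg_norm hk) ?_ ?_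
  · apply Measurable.aestronglyMeasurable
    refine (Measurable.mul ?_ ?_).mul ?_
    · exact Complex.measurable_ofReal.comp (g_meas_sphere hg_meas k)
    · exact (hφc.comp ((kplus_cont (f := fun x : Rd d => x) continuous_id).comp
        (Continuous.prodMk_right k))).measurable
    · exact (hψc.comp ((kminus_cont (f := fun x : Rd d => x) continuous_id).comp
        (Continuous.prodMk_right k))).measurable
  · filter_upwards with n
    exact norm_g_mul_le (hg_nonneg _) (hφn _) (hψn _)

lemma iplus_norm_le_one (hg_meas : Measurable g)
    (hg_nonneg : ∀ x, 0 ≤ g x)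
    (hg_norm : ∀ ω : Rd d, ‖ω‖ = 1 → ∫ n, g (inner ℝ ω (n : Rd d)) ∂(sphMeasure d) = 1)
    {φ ψ : Rd d → ℂ} (hφn : ∀ x, ‖φ x‖ ≤ 1) (hψn : ∀ x, ‖ψ x‖ ≤ 1)
    (k : Rd d) :
    ‖Iplus g φ ψ k‖ ≤ 1 := by
  rw [Iplus]
  split_ifs with h
  · rw [norm_mul]
    calc ‖φ 0‖ * ‖ψ 0‖ ≤ 1 * 1 := mul_le_mul (hφn 0) (hψn 0) (norm_nonneg _) zero_le_one
      _ = 1 := one_mul 1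
  · refine (norm_integral_le_integral_norm _).trans ?_
    calc ∫ n, ‖(g (khatDot k n) : ℂ) * φ (kplus k n) * ψ (kminus k n)‖ ∂(sphMeasure d)
        ≤ ∫ n, g (khatDot k n) ∂(sphMeasure d) := by
          refine integral_mono_of_nonneg ?_ (g_integrable hg_norm h) ?_
          · filter_upwards with n; exact norm_nonneg _
          · filter_upwards with n; exact norm_g_mul_le (hg_nonneg _) (hφn _) (hψn _)
      _ = 1 := g_integral_one hg_norm h

end AuxD
section AuxE
variable {d : ℕ} {g : ℝ → ℝ}

lemma lopR_nonneg (hg_nonneg : ∀ x, 0 ≤ g x) {v : Rd d → ℝ} (hv0 : ∀ x, 0 ≤ v x) (k : Rd d) :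
    0 ≤ LopR g v k := by
  rw [LopR]
  split_ifs with h
  · linarith [hv0 0]
  · refine integral_nonneg fun n => ?_
    exact mul_nonneg (hg_nonneg _) (by linarith [hv0 (kplus k n), hv0 (kminus k n)])

lemma gam_sub_le (hg_meas : Measurable g) (hg_nonneg : ∀ x, 0 ≤ g x)
    (hg_norm : ∀ ω : Rd d, ‖ω‖ = 1 → ∫ n, g (inner ℝ ω (n : Rd d)) ∂(sphMeasure d) = 1)
    {φ ψ : Rd d → ℂ} (hφn : ∀ x, ‖φ x‖ ≤ 1) (hψn : ∀ x, ‖ψ x‖ ≤ 1)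
    (hφc : Continuous φ) (hψc : Continuous ψ) (k : Rd d) :
    ‖Gam g φ k - Gam g ψ k‖ ≤ LopR g (fun x => ‖φ x - ψ x‖) k := by
  have key : ∀ a b a' b' : ℂ, ‖a‖ ≤ 1 → ‖b'‖ ≤ 1 →
      ‖a * b - a' * b'‖ ≤ ‖a - a'‖ + ‖b - b'‖ := by
    intro a b a' b' ha hb'
    have : a * b - a' * b' = a * (b - b') + (a - a') * b' := by ring
    rw [this]
    refine (norm_add_le _ _).trans ?_
    rw [norm_mul, norm_mul]
    have h1 : ‖a‖ * ‖b - b'‖ ≤ ‖b - b'‖ := by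
      nlinarith [norm_nonneg (b - b'), norm_nonneg a]
    have h2 : ‖a - a'‖ * ‖b'‖ ≤ ‖a - a'‖ := by
      nlinarith [norm_nonneg (a - a'), norm_nonneg b']
    linarith
  unfold Gam Iplus LopR
  split_ifs with h
  · refine (key _ _ _ _ (hφn 0) (hψn 0)).trans ?_
    simp only [Pi.zero_apply]
    linarith
  · rw [← integral_sub (iplus_integrand_integrable hg_meas hg_nonneg hg_norm hφn hφn hφc hφc h)
      (iplus_integrand_integrable hg_meas hg_nonneg hg_norm hψn hψn hψc hψc h)]
    refine (norm_integral_le_integral_norm _).trans ?_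
    refine integral_mono_of_nonneg (by filter_upwards with n; exact norm_nonneg _) ?_ ?_
    · -- integrability of n ↦ g * (‖φ(k₊)-ψ(k₊)‖ + ‖φ(k₋)-ψ(k₋)‖)
      refine Integrable.mono' ((g_integrable hg_norm h).const_mul 4) ?_ ?_
      · apply Measurable.aestronglyMeasurable
        refine (g_meas_sphere hg_meas k).mul (Measurable.add ?_ ?_)
        · exact ((hφc.sub hψc).norm.comp ((kplus_cont (f := fun x : Rd d => x)
            continuous_id).comp (Continuous.prodMk_right k))).measurable
        · exact ((hφc.sub hψc).norm.comp ((kminus_cont (f := fun x : Rd d => x)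
            continuous_id).comp (Continuous.prodMk_right k))).measurable
      · filter_upwards with n
        have e1 : ‖φ (kplus k n) - ψ (kplus k n)‖ ≤ 2 := by
          refine (norm_sub_le _ _).trans ?_; linarith [hφn (kplus k n), hψn (kplus k n)]
        have e2 : ‖φ (kminus k n) - ψ (kminus k n)‖ ≤ 2 := by
          refine (norm_sub_le _ _).trans ?_; linarith [hφn (kminus k n), hψn (kminus k n)]
        rw [Real.norm_of_nonneg (mul_nonneg (hg_nonneg _)
          (by positivity))]
        calc g (khatDot k n) * (‖φ (kplus k n) - ψ (kplus k n)‖ +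
              ‖φ (kminus k n) - ψ (kminus k n)‖) ≤ g (khatDot k n) * 4 := by
              apply mul_le_mul_of_nonneg_left (by linarith) (hg_nonneg _)
          _ = 4 * g (khatDot k n) := by ring
    · filter_upwards with n
      have expand : (g (khatDot k n) : ℂ) * φ (kplus k n) * φ (kminus k n) -
          (g (khatDot k n) : ℂ) * ψ (kplus k n) * ψ (kminus k n) =
          (g (khatDot k n) : ℂ) * (φ (kplus k n) * φ (kminus k n) -
            ψ (kplus k n) * ψ (kminus k n)) := by ring
      rw [expand, norm_mul, Complex.norm_real, Real.norm_of_nonneg (hg_nonneg _)]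
      exact mul_le_mul_of_nonneg_left
        (key _ _ _ _ (hφn (kplus k n)) (hψn (kminus k n))) (hg_nonneg _)

lemma lopR_le_add (hg_meas : Measurable g) (hg_nonneg : ∀ x, 0 ≤ g x)
    (hg_norm : ∀ ω : Rd d, ‖ω‖ = 1 → ∫ n, g (inner ℝ ω (n : Rd d)) ∂(sphMeasure d) = 1)
    {w v : Rd d → ℝ} (hw0 : ∀ x, 0 ≤ w x) (hvc : Continuous v)
    {B : ℝ} (hB : ∀ x, w x ≤ v x + B) (k : Rd d)
    {M : ℝ} (hM : ∀ x : Rd d, ‖x‖ ≤ ‖k‖ → v x ≤ M) (hv0 : ∀ x, 0 ≤ v x) :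
    LopR g w k ≤ LopR g v k + 2 * B := by
  rw [LopR, LopR]
  split_ifs with h
  · linarith [hB 0]
  · have hint_v : Integrable (fun n => g (khatDot k n) * (v (kplus k n) + v (kminus k n)))
        (sphMeasure d) := by
      refine Integrable.mono' ((g_integrable hg_norm h).const_mul (2 * M)) ?_ ?_
      · apply Measurable.aestronglyMeasurable
        refine (g_meas_sphere hg_meas k).mul (Measurable.add ?_ ?_)
        · exact (hvc.comp ((kplus_cont (f := fun x : Rd d => x)
            continuous_id).comp (Continuous.prodMk_right k))).measurable
        · exact (hvc.comp ((kminus_cont (f := fun x : Rd d => x)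
            continuous_id).comp (Continuous.prodMk_right k))).measurable
      · filter_upwards with n
        have e1 := hM _ (norm_kplus_le k n)
        have e2 := hM _ (norm_kminus_le k n)
        rw [Real.norm_of_nonneg (mul_nonneg (hg_nonneg _)
          (by linarith [hv0 (kplus k n), hv0 (kminus k n)]))]
        calc g (khatDot k n) * (v (kplus k n) + v (kminus k n))
            ≤ g (khatDot k n) * (2 * M) :=
              mul_le_mul_of_nonneg_left (by linarith) (hg_nonneg _)
          _ = 2 * M * g (khatDot k n) := by ring
    have hint_B : Integrable (fun n => 2 * B * g (khatDot k n)) (sphMeasure d) :=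
      (g_integrable hg_norm h).const_mul (2 * B)
    calc (∫ n, g (khatDot k n) * (w (kplus k n) + w (kminus k n)) ∂(sphMeasure d))
        ≤ ∫ n, (g (khatDot k n) * (v (kplus k n) + v (kminus k n))
            + 2 * B * g (khatDot k n)) ∂(sphMeasure d) := by
          refine integral_mono_of_nonneg ?_ (hint_v.add hint_B) ?_
          · filter_upwards with n
            exact mul_nonneg (hg_nonneg _)
              (by linarith [hw0 (kplus k n), hw0 (kminus k n)])
          · filter_upwards with n
            have e1 := hB (kplus k n)
            have e2 := hB (kminus k n)
            have := hg_nonneg (khatDot k n)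
            nlinarith
      _ = (∫ n, g (khatDot k n) * (v (kplus k n) + v (kminus k n)) ∂(sphMeasure d))
            + 2 * B * ∫ n, g (khatDot k n) ∂(sphMeasure d) := by
          rw [integral_add hint_v hint_B, integral_const_mul]
      _ = (∫ n, g (khatDot k n) * (v (kplus k n) + v (kminus k n)) ∂(sphMeasure d))
            + 2 * B := by rw [g_integral_one hg_norm h, mul_one]

end AuxE
section AuxF
variable {d : ℕ} {g : ℝ → ℝ}

lemma mild_joint_cont {φ : ℝ → Rd d → ℂ}
    (hchar : ∀ t, 0 ≤ t → IsCharFun (φ t))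
    (hcont : ∀ t, 0 ≤ t → ∀ ε > (0:ℝ), ∃ δ > (0:ℝ), ∀ s, 0 ≤ s → |s - t| < δ →
      ∀ k, ‖φ s k - φ t k‖ ≤ ε) :
    Continuous fun q : ℝ × Rd d => φ (max q.1 0) q.2 := by
  rw [continuous_iff_continuousAt]
  intro q₀
  obtain ⟨τ₀, x₀⟩ := q₀
  rw [Metric.continuousAt_iff]
  intro ε hε
  have ht₀ : (0:ℝ) ≤ max τ₀ 0 := le_max_right _ _
  obtain ⟨δ₁, hδ₁pos, hδ₁⟩ := hcont (max τ₀ 0) ht₀ (ε/3) (by linarith)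
  obtain ⟨δ₂, hδ₂pos, hδ₂⟩ :=
    Metric.continuous_iff.mp (hchar (max τ₀ 0) ht₀).continuous x₀ (ε/3) (by linarith)
  refine ⟨min δ₁ δ₂, by positivity, ?_⟩
  intro q hq
  obtain ⟨τ, x⟩ := q
  rw [Prod.dist_eq] at hq
  have h1 : dist τ τ₀ < min δ₁ δ₂ := lt_of_le_of_lt (le_max_left _ _) hq
  have h2 : dist x x₀ < min δ₁ δ₂ := lt_of_le_of_lt (le_max_right _ _) hq
  have hτ : |max τ 0 - max τ₀ 0| < δ₁ := by
    refine lt_of_le_of_lt (abs_max_sub_max_le_abs τ τ₀ 0) ?_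
    rw [Real.dist_eq] at h1
    exact lt_of_lt_of_le h1 (min_le_left _ _)
  have e1 : ‖φ (max τ 0) x - φ (max τ₀ 0) x‖ ≤ ε/3 := hδ₁ _ (le_max_right _ _) hτ x
  have e2 : dist (φ (max τ₀ 0) x) (φ (max τ₀ 0) x₀) < ε/3 :=
    hδ₂ x (lt_of_lt_of_le h2 (min_le_right _ _))
  calc dist (φ (max τ 0) x) (φ (max τ₀ 0) x₀)
      ≤ dist (φ (max τ 0) x) (φ (max τ₀ 0) x) + dist (φ (max τ₀ 0) x) (φ (max τ₀ 0) x₀) :=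
        dist_triangle _ _ _
    _ < ε/3 + ε/3 := by
        rw [dist_eq_norm]
        have : dist (φ (max τ₀ 0) x) (φ (max τ₀ 0) x₀) < ε / 3 := e2
        apply add_lt_add_of_le_of_lt e1 this
    _ < ε := by linarith

lemma gam_sm (hg_meas : Measurable g) (A : Matrix (Fin d) (Fin d) ℝ) (t : ℝ)
    {k : Rd d} (hk : k ≠ 0) {φ : ℝ → Rd d → ℂ}
    (hφj : Continuous fun q : ℝ × Rd d => φ q.1 q.2) :
    StronglyMeasurable fun τ : ℝ => Gam g (φ τ) (expA A (-(t - τ)) k) := by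
  have hkf : Continuous fun τ : ℝ => expA A (-(t - τ)) k := expA_cont A t k
  have hkf0 : ∀ τ : ℝ, expA A (-(t - τ)) k ≠ 0 := fun τ => expA_ne_zero A _ hk
  have heq : (fun τ : ℝ => Gam g (φ τ) (expA A (-(t - τ)) k)) = fun τ : ℝ =>
      ∫ n, ((g (khatDot (expA A (-(t - τ)) k) n) : ℂ)
        * φ τ (kplus (expA A (-(t - τ)) k) n)
        * φ τ (kminus (expA A (-(t - τ)) k) n)) ∂(sphMeasure d) := by
    funext τ
    rw [Gam, Iplus, if_neg (hkf0 τ)]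
  rw [heq]
  apply StronglyMeasurable.integral_prod_right'
    (f := fun q : ℝ × Sd d => (g (khatDot (expA A (-(t - q.1)) k) q.2) : ℂ)
      * φ q.1 (kplus (expA A (-(t - q.1)) k) q.2)
      * φ q.1 (kminus (expA A (-(t - q.1)) k) q.2))
  apply Measurable.stronglyMeasurable
  refine Measurable.mul (Measurable.mul ?_ ?_) ?_
  · exact Complex.measurable_ofReal.comp
      (hg_meas.comp (khatDot_cont hkf hkf0).measurable)
  · exact (hφj.comp (continuous_fst.prodMk (kplus_cont hkf))).measurable
  · exact (hφj.comp (continuous_fst.prodMk (kminus_cont hkf))).measurable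

lemma lopR_sm (hg_meas : Measurable g) (A : Matrix (Fin d) (Fin d) ℝ) (t : ℝ)
    {k : Rd d} (hk : k ≠ 0) {v : ℝ → Rd d → ℝ}
    (hvj : Continuous fun q : ℝ × Rd d => v q.1 q.2) :
    StronglyMeasurable fun τ : ℝ => LopR g (v τ) (expA A (-(t - τ)) k) := by
  have hkf : Continuous fun τ : ℝ => expA A (-(t - τ)) k := expA_cont A t k
  have hkf0 : ∀ τ : ℝ, expA A (-(t - τ)) k ≠ 0 := fun τ => expA_ne_zero A _ hk
  have heq : (fun τ : ℝ => LopR g (v τ) (expA A (-(t - τ)) k)) = fun τ : ℝ =>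
      ∫ n, (g (khatDot (expA A (-(t - τ)) k) n)
        * (v τ (kplus (expA A (-(t - τ)) k) n)
          + v τ (kminus (expA A (-(t - τ)) k) n))) ∂(sphMeasure d) := by
    funext τ
    rw [LopR, if_neg (hkf0 τ)]
  rw [heq]
  apply StronglyMeasurable.integral_prod_right'
    (f := fun q : ℝ × Sd d => g (khatDot (expA A (-(t - q.1)) k) q.2)
      * (v q.1 (kplus (expA A (-(t - q.1)) k) q.2)
        + v q.1 (kminus (expA A (-(t - q.1)) k) q.2)))
  apply Measurable.stronglyMeasurable
  refine Measurable.mul ?_ (Measurable.add ?_ ?_)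
  · exact hg_meas.comp (khatDot_cont hkf hkf0).measurable
  · exact (hvj.comp (continuous_fst.prodMk (kplus_cont hkf))).measurable
  · exact (hvj.comp (continuous_fst.prodMk (kminus_cont hkf))).measurable

end AuxF
section AuxG
variable {d : ℕ} {g : ℝ → ℝ}

lemma lopR_le_const (hg_meas : Measurable g) (hg_nonneg : ∀ x, 0 ≤ g x)
    (hg_norm : ∀ ω : Rd d, ‖ω‖ = 1 → ∫ n, g (inner ℝ ω (n : Rd d)) ∂(sphMeasure d) = 1)
    {v : Rd d → ℝ} (hv0 : ∀ x, 0 ≤ v x) (hvc : Continuous v) (k : Rd d)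
    {M : ℝ} (hM : ∀ x : Rd d, ‖x‖ ≤ ‖k‖ → v x ≤ M) :
    LopR g v k ≤ 2 * M := by
  rw [LopR]
  split_ifs with h
  · have := hM 0 (by simp)
    linarith
  · calc (∫ n, g (khatDot k n) * (v (kplus k n) + v (kminus k n)) ∂(sphMeasure d))
        ≤ ∫ n, 2 * M * g (khatDot k n) ∂(sphMeasure d) := by
          refine integral_mono_of_nonneg ?_ ((g_integrable hg_norm h).const_mul (2*M)) ?_
          · filter_upwards with n
            exact mul_nonneg (hg_nonneg _)
              (by linarith [hv0 (kplus k n), hv0 (kminus k n)])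
          · filter_upwards with n
            have e1 := hM _ (norm_kplus_le k n)
            have e2 := hM _ (norm_kminus_le k n)
            have := hg_nonneg (khatDot k n)
            nlinarith
      _ = 2 * M := by rw [integral_const_mul, g_integral_one hg_norm h, mul_one]

lemma G_sm (hg_meas : Measurable g) (A : Matrix (Fin d) (Fin d) ℝ) (t : ℝ) (k : Rd d)
    {φ : ℝ → Rd d → ℂ} (hφj : Continuous fun q : ℝ × Rd d => φ (max q.1 0) q.2) :
    StronglyMeasurable fun τ : ℝ => Gam g (φ (max τ 0)) (expA A (-(t - τ)) k) := by
  by_cases hk : k = 0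
  · subst hk
    have heq : (fun τ : ℝ => Gam g (φ (max τ 0)) (expA A (-(t - τ)) 0)) =
        fun τ : ℝ => φ (max τ 0) 0 * φ (max τ 0) 0 := by
      funext τ
      rw [expA_zero_vec, Gam, Iplus, if_pos rfl]
    rw [heq]
    exact ((hφj.comp (continuous_id.prodMk continuous_const)).mul
      (hφj.comp (continuous_id.prodMk continuous_const))).stronglyMeasurable
  · exact gam_sm hg_meas A t hk (φ := fun τ => φ (max τ 0)) hφj

lemma L_sm (hg_meas : Measurable g) (A : Matrix (Fin d) (Fin d) ℝ) (t : ℝ) (k : Rd d)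
    {v : ℝ → Rd d → ℝ} (hvj : Continuous fun q : ℝ × Rd d => v (max q.1 0) q.2) :
    StronglyMeasurable fun τ : ℝ => LopR g (v (max τ 0)) (expA A (-(t - τ)) k) := by
  by_cases hk : k = 0
  · subst hk
    have heq : (fun τ : ℝ => LopR g (v (max τ 0)) (expA A (-(t - τ)) 0)) =
        fun τ : ℝ => 2 * v (max τ 0) 0 := by
      funext τ
      rw [expA_zero_vec, LopR, if_pos rfl]
    rw [heq]
    exact (continuous_const.mul
      (hvj.comp (continuous_id.prodMk continuous_const))).stronglyMeasurable
  · exact lopR_sm hg_meas A t hk (v := fun τ => v (max τ 0)) hvj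

end AuxG

/-- Comparison theorem: a supersolution of the linearized problem with
    initial datum |φ₁,₀ − φ₂,₀| dominates the difference of two mild solutions. -/
theorem comparison_theorem (d : ℕ) (hd : 2 ≤ d)
    (g : ℝ → ℝ) (hg_meas : Measurable g) (hg_nonneg : ∀ x, 0 ≤ g x)
    (hg_norm : ∀ ω : Rd d, ‖ω‖ = 1 → ∫ n, g ⟪ω, (n : Rd d)⟫ ∂(sphMeasure d) = 1)
    (A : Matrix (Fin d) (Fin d) ℝ)
    (φ₁₀ φ₂₀ : Rd d → ℂ) (hφ₁₀ : IsCharFun φ₁₀) (hφ₂₀ : IsCharFun φ₂₀)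
    (φ₁ φ₂ : ℝ → Rd d → ℂ)
    (h₁ : IsMildSolution g A φ₁₀ φ₁) (h₂ : IsMildSolution g A φ₂₀ φ₂)
    (p : ℝ) (hp : 0 < p)
    (u : ℝ → Rd d → ℝ)
    (hu_cont : ContinuousOn (fun q : ℝ × Rd d => u q.1 q.2) (Set.Ici 0 ×ˢ Set.univ))
    (hu_nonneg : ∀ t, 0 ≤ t → ∀ k, 0 ≤ u t k)
    (hu_growth : ∀ t, 0 ≤ t → ∃ C : ℝ, ∀ k, u t k ≤ C * (1 + ‖k‖ ^ p))
    (hu_super : ∀ t, 0 ≤ t → ∀ k : Rd d,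
      Real.exp (-t) * ‖φ₁₀ (expA A (-t) k) - φ₂₀ (expA A (-t) k)‖
          + (∫ τ in (0:ℝ)..t, Real.exp (-(t - τ)) * LopR g (u τ) (expA A (-(t - τ)) k))
        ≤ u t k) :
    ∀ t, 0 ≤ t → ∀ k : Rd d, ‖φ₁ t k - φ₂ t k‖ ≤ u t k := by
  obtain ⟨hc₁, hcu₁, he₁⟩ := h₁
  obtain ⟨hc₂, hcu₂, he₂⟩ := h₂
  have hφ₁j := mild_joint_cont hc₁ hcu₁
  have hφ₂j := mild_joint_cont hc₂ hcu₂
  have huj : Continuous fun q : ℝ × Rd d => u (max q.1 0) q.2 := by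
    refine hu_cont.comp_continuous
      ((continuous_fst.max continuous_const).prodMk continuous_snd) ?_
    intro q
    exact Set.mk_mem_prod (Set.mem_Ici.mpr (le_max_right _ _)) trivial
  have hucont : ∀ τ : ℝ, 0 ≤ τ → Continuous (u τ) := by
    intro τ hτ
    have h1 : Continuous fun x : Rd d => u (max τ 0) x :=
      huj.comp (continuous_const.prodMk continuous_id)
    rwa [max_eq_left hτ] at h1
  -- main induction
  have key : ∀ n : ℕ, ∀ t, 0 ≤ t → ∀ k : Rd d,
      ‖φ₁ t k - φ₂ t k‖ - u t k ≤ 2 * (2*t)^n / (n.factorial : ℝ) := by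
    intro n
    induction n with
    | zero =>
      intro t ht k
      have e1 := (hc₁ t ht).norm_le_one k
      have e2 := (hc₂ t ht).norm_le_one k
      have e3 := hu_nonneg t ht k
      have e4 := norm_sub_le (φ₁ t k) (φ₂ t k)
      simp only [pow_zero, Nat.factorial_zero, Nat.cast_one, mul_one, div_one]
      linarith
    | succ n IH =>
      intro t ht k
      -- bound on the trajectory
      obtain ⟨R, hR⟩ := (isCompact_Icc (a := (0:ℝ)) (b := t)).exists_bound_of_continuousOn
        (expA_cont A t k).continuousOn
      -- bound on u over the compact set
      obtain ⟨M, hM⟩ := ((isCompact_Icc (a := (0:ℝ)) (b := t)).prod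
        (isCompact_closedBall (0 : Rd d) R)).exists_bound_of_continuousOn
        (hu_cont.mono (by
          intro q hq
          exact Set.mk_mem_prod hq.1.1 trivial))
      have hMuse : ∀ τ ∈ Set.Icc (0:ℝ) t, ∀ x : Rd d, ‖x‖ ≤ ‖expA A (-(t - τ)) k‖ →
          u τ x ≤ M := by
        intro τ hτ x hx
        have hkfR : ‖expA A (-(t - τ)) k‖ ≤ R := hR τ hτ
        have hmem : (τ, x) ∈ (Set.Icc (0:ℝ) t) ×ˢ Metric.closedBall (0 : Rd d) R :=
          Set.mk_mem_prod hτ (by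
            rw [Metric.mem_closedBall, dist_zero_right]
            exact hx.trans hkfR)
        exact (le_abs_self _).trans (le_of_eq_of_le (Real.norm_eq_abs _).symm (hM _ hmem))
      -- integrability of G₁, G₂
      have hGint : ∀ (φ : ℝ → Rd d → ℂ), (∀ s, 0 ≤ s → IsCharFun (φ s)) →
          (Continuous fun q : ℝ × Rd d => φ (max q.1 0) q.2) →
          IntervalIntegrable
            (fun τ => (Real.exp (-(t - τ)) : ℂ) * Gam g (φ τ) (expA A (-(t - τ)) k))
            volume 0 t := by
        intro φ hc hφj
        rw [intervalIntegrable_iff_integrableOn_Ioc_of_le ht]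
        constructor
        · have hsm : StronglyMeasurable fun τ : ℝ =>
              (Real.exp (-(t - τ)) : ℂ) * Gam g (φ (max τ 0)) (expA A (-(t - τ)) k) := by
            refine StronglyMeasurable.mul ?_ (G_sm hg_meas A t k hφj)
            exact (Complex.continuous_ofReal.comp
              ((continuous_const.sub continuous_id).neg.rexp)).stronglyMeasurable
          refine AEStronglyMeasurable.congr hsm.aestronglyMeasurable.restrict ?_
          filter_upwards [ae_restrict_mem measurableSet_Ioc] with τ hτ
          simp only [max_eq_left hτ.1.le]
        · apply HasFiniteIntegral.of_bounded (C := 1)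
          filter_upwards [ae_restrict_mem measurableSet_Ioc] with τ hτ
          rw [norm_mul, Complex.norm_real, Real.norm_of_nonneg (Real.exp_pos _).le]
          have hb := iplus_norm_le_one hg_meas hg_nonneg hg_norm
            ((hc τ hτ.1.le).norm_le_one) ((hc τ hτ.1.le).norm_le_one)
            (expA A (-(t - τ)) k)
          have he : Real.exp (-(t - τ)) ≤ 1 := by
            rw [Real.exp_le_one_iff]
            linarith [hτ.2]
          calc Real.exp (-(t - τ)) * ‖Gam g (φ τ) (expA A (-(t - τ)) k)‖ ≤ 1 * 1 := by
                apply mul_le_mul he hb (norm_nonneg _) zero_le_one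
            _ = 1 := one_mul 1
      have hInt₁ := hGint φ₁ hc₁ hφ₁j
      have hInt₂ := hGint φ₂ hc₂ hφ₂j
      -- integrability of the LopR-u term
      have hIntL : IntervalIntegrable
          (fun τ => Real.exp (-(t - τ)) * LopR g (u τ) (expA A (-(t - τ)) k)) volume 0 t := by
        rw [intervalIntegrable_iff_integrableOn_Ioc_of_le ht]
        constructor
        · have hsm : StronglyMeasurable fun τ : ℝ =>
              Real.exp (-(t - τ)) * LopR g (u (max τ 0)) (expA A (-(t - τ)) k) := by
            refine StronglyMeasurable.mul ?_ (L_sm hg_meas A t k huj)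
            exact ((continuous_const.sub continuous_id).neg.rexp).stronglyMeasurable
          refine AEStronglyMeasurable.congr hsm.aestronglyMeasurable.restrict ?_
          filter_upwards [ae_restrict_mem measurableSet_Ioc] with τ hτ
          simp only [max_eq_left hτ.1.le]
        · apply HasFiniteIntegral.of_bounded (C := 2 * M)
          filter_upwards [ae_restrict_mem measurableSet_Ioc] with τ hτ
          have hL0 : 0 ≤ LopR g (u τ) (expA A (-(t - τ)) k) :=
            lopR_nonneg hg_nonneg (hu_nonneg τ hτ.1.le) _
          have hLM : LopR g (u τ) (expA A (-(t - τ)) k) ≤ 2 * M :=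
            lopR_le_const hg_meas hg_nonneg hg_norm (hu_nonneg τ hτ.1.le)
              (hucont τ hτ.1.le) (expA A (-(t - τ)) k) (hMuse τ ⟨hτ.1.le, hτ.2⟩)
          have he : Real.exp (-(t - τ)) ≤ 1 := by
            rw [Real.exp_le_one_iff]; linarith [hτ.2]
          have h0 : (0:ℝ) ≤ Real.exp (-(t - τ)) := (Real.exp_pos _).le
          rw [Real.norm_of_nonneg (mul_nonneg h0 hL0)]
          calc Real.exp (-(t - τ)) * LopR g (u τ) (expA A (-(t - τ)) k)
              ≤ 1 * (2 * M) := mul_le_mul he hLM hL0 zero_le_one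
            _ = 2 * M := one_mul _
      -- integrability of the polynomial term
      have hIntP : IntervalIntegrable
          (fun τ : ℝ => 2 * (2 * (2*τ)^n / (n.factorial : ℝ))) volume 0 t :=
        (Continuous.intervalIntegrable (by fun_prop) 0 t)
      -- the difference identity
      have heq : φ₁ t k - φ₂ t k =
          (Real.exp (-t) : ℂ) * (φ₁₀ (expA A (-t) k) - φ₂₀ (expA A (-t) k))
            + ∫ τ in (0:ℝ)..t,
                ((Real.exp (-(t - τ)) : ℂ) * Gam g (φ₁ τ) (expA A (-(t - τ)) k)
                  - (Real.exp (-(t - τ)) : ℂ) * Gam g (φ₂ τ) (expA A (-(t - τ)) k)) := by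
        rw [he₁ t ht k, he₂ t ht k, intervalIntegral.integral_sub hInt₁ hInt₂]
        ring
      -- norm inequality
      have hnorm : ‖φ₁ t k - φ₂ t k‖ ≤
          Real.exp (-t) * ‖φ₁₀ (expA A (-t) k) - φ₂₀ (expA A (-t) k)‖
            + ∫ τ in (0:ℝ)..t,
                ‖(Real.exp (-(t - τ)) : ℂ) * Gam g (φ₁ τ) (expA A (-(t - τ)) k)
                  - (Real.exp (-(t - τ)) : ℂ) * Gam g (φ₂ τ) (expA A (-(t - τ)) k)‖ := by
        rw [heq]
        refine (norm_add_le _ _).trans ?_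
        apply add_le_add
        · rw [norm_mul, Complex.norm_real, Real.norm_of_nonneg (Real.exp_pos _).le]
        · exact intervalIntegral.norm_integral_le_integral_norm ht
      -- pointwise comparison
      have hpt : ∀ τ ∈ Set.Icc (0:ℝ) t,
          ‖(Real.exp (-(t - τ)) : ℂ) * Gam g (φ₁ τ) (expA A (-(t - τ)) k)
            - (Real.exp (-(t - τ)) : ℂ) * Gam g (φ₂ τ) (expA A (-(t - τ)) k)‖ ≤
          Real.exp (-(t - τ)) * LopR g (u τ) (expA A (-(t - τ)) k)
            + 2 * (2 * (2*τ)^n / (n.factorial : ℝ)) := by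
        intro τ hτ
        have hW : ‖Gam g (φ₁ τ) (expA A (-(t - τ)) k)
              - Gam g (φ₂ τ) (expA A (-(t - τ)) k)‖ ≤
            LopR g (fun x => ‖φ₁ τ x - φ₂ τ x‖) (expA A (-(t - τ)) k) :=
          gam_sub_le hg_meas hg_nonneg hg_norm ((hc₁ τ hτ.1).norm_le_one)
            ((hc₂ τ hτ.1).norm_le_one) (hc₁ τ hτ.1).continuous (hc₂ τ hτ.1).continuous _
        have hL : LopR g (fun x => ‖φ₁ τ x - φ₂ τ x‖) (expA A (-(t - τ)) k) ≤
            LopR g (u τ) (expA A (-(t - τ)) k)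
              + 2 * (2 * (2*τ)^n / (n.factorial : ℝ)) := by
          refine lopR_le_add hg_meas hg_nonneg hg_norm
            (fun x => norm_nonneg _) (hucont τ hτ.1) ?_ (expA A (-(t - τ)) k) (M := M)
            (hMuse τ hτ) (hu_nonneg τ hτ.1)
          intro x
          have := IH τ hτ.1 x
          linarith
        have he : Real.exp (-(t - τ)) ≤ 1 := by
          rw [Real.exp_le_one_iff]; linarith [hτ.2]
        have h0 : (0:ℝ) ≤ Real.exp (-(t - τ)) := (Real.exp_pos _).le
        have hL0 : 0 ≤ LopR g (u τ) (expA A (-(t - τ)) k) :=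
          lopR_nonneg hg_nonneg (hu_nonneg τ hτ.1) _
        have hB0 : (0:ℝ) ≤ 2 * (2 * (2*τ)^n / (n.factorial : ℝ)) := by
          have h2 : (0:ℝ) ≤ (2*τ)^n := pow_nonneg (by linarith [hτ.1]) n
          have h3 : (0:ℝ) ≤ (n.factorial : ℝ) := Nat.cast_nonneg _
          exact mul_nonneg (by norm_num) (div_nonneg (mul_nonneg (by norm_num) h2) h3)
        rw [← mul_sub, norm_mul, Complex.norm_real, Real.norm_of_nonneg h0]
        have h1 : Real.exp (-(t - τ)) *
            ‖Gam g (φ₁ τ) (expA A (-(t - τ)) k) - Gam g (φ₂ τ) (expA A (-(t - τ)) k)‖ ≤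
            Real.exp (-(t - τ)) * (LopR g (u τ) (expA A (-(t - τ)) k)
              + 2 * (2 * (2*τ)^n / (n.factorial : ℝ))) :=
          mul_le_mul_of_nonneg_left (hW.trans hL) h0
        nlinarith
      -- put the integrals together
      have hmono := intervalIntegral.integral_mono_on ht
        ((hInt₁.sub hInt₂).norm) (hIntL.add hIntP) hpt
      have hsplit := intervalIntegral.integral_add hIntL hIntP
      have hP : (∫ τ in (0:ℝ)..t, 2 * (2 * (2*τ)^n / (n.factorial : ℝ)))
          = 2 * (2*t)^(n+1) / ((n+1).factorial : ℝ) := by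
        have hrw : (fun τ : ℝ => 2 * (2 * (2*τ)^n / (n.factorial : ℝ)))
            = fun τ : ℝ => (4 * 2^n / (n.factorial : ℝ)) * τ^n := by
          funext τ; rw [mul_pow]; ring
        rw [hrw, intervalIntegral.integral_const_mul, integral_pow]
        have hn : (n.factorial : ℝ) ≠ 0 := Nat.cast_ne_zero.mpr n.factorial_ne_zero
        have hn1 : ((n+1).factorial : ℝ) = (n+1) * (n.factorial : ℝ) := by
          rw [Nat.factorial_succ]; push_cast; ring
        rw [hn1, mul_pow]
        field_simp
        ring
      have hsuper := hu_super t ht k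
      rw [hsplit, hP] at hmono
      linarith
  intro t ht k
  have hlim : Filter.Tendsto (fun n : ℕ => 2 * (2*t)^n / (n.factorial : ℝ))
      Filter.atTop (nhds 0) := by
    have h := (FloorSemiring.tendsto_pow_div_factorial_atTop (K := ℝ) (2*t)).const_mul (2:ℝ)
    rw [mul_zero] at h
    have heq : (fun n : ℕ => 2 * ((2*t)^n / (n.factorial : ℝ)))
        = fun n : ℕ => 2 * (2*t)^n / (n.factorial : ℝ) := by
      funext n; ring
    rwa [heq] at h
  have hle : ‖φ₁ t k - φ₂ t k‖ - u t k ≤ 0 :=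
    ge_of_tendsto' hlim (fun n => key n t ht k)
  linarith

end
end

section
/- For every p > 0 the function |k|^p is an eigenfunction of the linearized operator L with eigenvalue 1 − λ(p): for every k ∈ ℝ^d \ {0}, ∫_{S^{d-1}} g(k̂·n) (|k₊|^p + |k₋|^p) dσ(n) = (1 − λ(p)) |k|^p. -/
open MeasureTheory
open scoped Classical Matrix
noncomputable section

open scoped RealInnerProductSpace

open scoped Pointwise

namespace SphereAux

/-- The sphere map induced by a linear isometry equivalence. -/
def sphMapFun {d : ℕ} (R : Rd d ≃ₗᵢ[ℝ] Rd d) (n : Sd d) : Sd d :=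
  ⟨R n, by
    rw [mem_sphere_zero_iff_norm, R.norm_map]
    exact mem_sphere_zero_iff_norm.1 n.2⟩

lemma sphMapFun_cont {d : ℕ} (R : Rd d ≃ₗᵢ[ℝ] Rd d) : Continuous (sphMapFun R) :=
  Continuous.subtype_mk (R.continuous.comp continuous_subtype_val) _

def sphMap {d : ℕ} (R : Rd d ≃ₗᵢ[ℝ] Rd d) : Sd d ≃ᵐ Sd d :=
  Homeomorph.toMeasurableEquiv
  { toFun := sphMapFun R
    invFun := sphMapFun R.symm
    left_inv := fun n => by ext1; simp [sphMapFun]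
    right_inv := fun n => by ext1; simp [sphMapFun]
    continuous_toFun := sphMapFun_cont R
    continuous_invFun := sphMapFun_cont R.symm }

lemma sphMap_apply {d : ℕ} (R : Rd d ≃ₗᵢ[ℝ] Rd d) (n : Sd d) :
    (sphMap R n : Rd d) = R n := rfl

lemma sphMap_map {d : ℕ} (R : Rd d ≃ₗᵢ[ℝ] Rd d) :
    Measure.map (sphMap R) (sphMeasure d) = sphMeasure d := by
  ext s hs
  rw [MeasurableEquiv.map_apply]
  rw [show sphMeasure d = (volume : Measure (Rd d)).toSphere from rfl]
  rw [Measure.toSphere_apply' _ hs, Measure.toSphere_apply' _ ((sphMap R).measurable hs)]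
  congr 1
  have himg : (Subtype.val '' ((sphMap R) ⁻¹' s)) = ⇑R ⁻¹' (Subtype.val '' s) := by
    ext x
    constructor
    · rintro ⟨a, ha, rfl⟩
      exact ⟨sphMap R a, ha, rfl⟩
    · rintro ⟨b, hb, hbx⟩
      have hxn : ‖x‖ = 1 := by
        have h1 : ‖R x‖ = 1 := by rw [← hbx]; exact mem_sphere_zero_iff_norm.1 b.2
        rwa [R.norm_map] at h1
      refine ⟨⟨x, mem_sphere_zero_iff_norm.2 hxn⟩, ?_, rfl⟩
      show sphMap R _ ∈ s
      have h2 : sphMap R ⟨x, mem_sphere_zero_iff_norm.2 hxn⟩ = b := by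
        ext1; exact hbx.symm
      rwa [h2]
  rw [himg]
  have hsmul : Set.Ioo (0:ℝ) 1 • (⇑R ⁻¹' (Subtype.val '' s))
      = ⇑R ⁻¹' (Set.Ioo (0:ℝ) 1 • (Subtype.val '' s)) := by
    ext x
    simp only [Set.mem_smul, Set.mem_preimage]
    constructor
    · rintro ⟨c, hc, y, hy, rfl⟩
      exact ⟨c, hc, R y, hy, by simp [R.map_smul]⟩
    · rintro ⟨c, hc, a, ha, hax⟩
      refine ⟨c, hc, R.symm a, by simpa using ha, ?_⟩
      apply R.injective
      rw [← hax]
      simp [R.map_smul]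
  rw [hsmul]
  have hmp := (R.measurePreserving).map_eq
  calc volume (⇑R ⁻¹' (Set.Ioo (0:ℝ) 1 • (Subtype.val '' s)))
      = Measure.map R.toMeasurableEquiv volume (Set.Ioo (0:ℝ) 1 • (Subtype.val '' s)) :=
        (R.toMeasurableEquiv.map_apply _).symm
    _ = volume (Set.Ioo (0:ℝ) 1 • (Subtype.val '' s)) := by
        rw [show ⇑R.toMeasurableEquiv = ⇑R from rfl, hmp]

lemma sphere_integral_comp {d : ℕ} (R : Rd d ≃ₗᵢ[ℝ] Rd d) (f : Sd d → ℝ) :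
    ∫ n, f (sphMap R n) ∂(sphMeasure d) = ∫ n, f n ∂(sphMeasure d) := by
  conv_rhs => rw [← sphMap_map R]
  rw [MeasureTheory.integral_map_equiv]

lemma rpow_of_sq {d : ℕ} {v : Rd d} {x : ℝ} (h : ‖v‖^2 = x) (p : ℝ) :
    ‖v‖ ^ p = x ^ (p/2) := by
  rw [← h, ← Real.rpow_natCast ‖v‖ 2, ← Real.rpow_mul (norm_nonneg v)]
  congr 1; ring

end SphereAux


/-- |k|^p is an eigenfunction of the linearized collision operator:
    L[|·|^p](k) = (1 − λ(p))|k|^p. -/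
theorem Lop_rpow_eigenfunction (d : ℕ) (hd : 2 ≤ d)
    (g : ℝ → ℝ) (hg_meas : Measurable g) (hg_nonneg : ∀ x, 0 ≤ g x)
    (hg_norm : ∀ ω : Rd d, ‖ω‖ = 1 → ∫ n, g ⟪ω, (n : Rd d)⟫ ∂(sphMeasure d) = 1)
    (p : ℝ) (hp : 0 < p) :
    ∀ ω : Rd d, ‖ω‖ = 1 → ∀ k : Rd d, k ≠ 0 →
      (∫ n, g (khatDot k n) * (‖kplus k n‖ ^ p + ‖kminus k n‖ ^ p) ∂(sphMeasure d))
        = (1 - ∫ n, g ⟪ω, (n : Rd d)⟫ *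
              (1 - ((1 + ⟪ω, (n : Rd d)⟫) / 2) ^ (p / 2)
                 - ((1 - ⟪ω, (n : Rd d)⟫) / 2) ^ (p / 2)) ∂(sphMeasure d))
          * ‖k‖ ^ p := by
  intro ω hω k hk
  classical
  have hkn : ‖k‖ ≠ 0 := norm_ne_zero_iff.2 hk
  set μ := sphMeasure d with hμ
  set u : Rd d := ‖k‖⁻¹ • k with hu_def
  have hu : ‖u‖ = 1 := by
    rw [hu_def, norm_smul, Real.norm_eq_abs,
      abs_of_nonneg (inv_nonneg.2 (norm_nonneg k)), inv_mul_cancel₀ hkn]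
  set F : ℝ → ℝ := fun t => ((1+t)/2)^(p/2) + ((1-t)/2)^(p/2) with hF
  have key : ∀ (v : Rd d), ‖v‖ = 1 → ∀ n : Sd d, |⟪v, (n : Rd d)⟫| ≤ 1 := by
    intro v hv n
    have h := abs_real_inner_le_norm v (n : Rd d)
    rw [hv, mem_sphere_zero_iff_norm.1 n.2] at h
    simpa using h
  have hdot : ∀ n : Sd d, khatDot k n = ⟪u, (n : Rd d)⟫ := fun n => rfl
  -- norm computations
  have hnormpm : ∀ n : Sd d,
      ‖kplus k n‖ ^ p = ‖k‖ ^ p * ((1 + khatDot k n)/2) ^ (p/2) ∧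
      ‖kminus k n‖ ^ p = ‖k‖ ^ p * ((1 - khatDot k n)/2) ^ (p/2) := by
    intro n
    set t := khatDot k n with ht
    have hn1 : ‖(n : Rd d)‖ = 1 := mem_sphere_zero_iff_norm.1 n.2
    have hin : ⟪k, (n : Rd d)⟫ = ‖k‖ * t := by
      rw [ht, khatDot, real_inner_smul_left]; field_simp
    have habs : |t| ≤ 1 := by rw [ht, hdot n]; exact key u hu n
    have h1 := abs_le.1 habs
    constructor
    · have hsq : ‖kplus k n‖^2 = ‖k‖^2 * ((1 + t)/2) := by
        rw [kplus, norm_smul, mul_pow, norm_add_sq_real, real_inner_smul_right, hin,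
          norm_smul, hn1, Real.norm_eq_abs, Real.norm_eq_abs,
          abs_of_nonneg (norm_nonneg k)]
        norm_num; ring
      rw [SphereAux.rpow_of_sq hsq, Real.mul_rpow (by positivity) (by nlinarith),
        ← SphereAux.rpow_of_sq (rfl : ‖k‖^2 = ‖k‖^2) p]
    · have hsq : ‖kminus k n‖^2 = ‖k‖^2 * ((1 - t)/2) := by
        rw [kminus, norm_smul, mul_pow, norm_sub_sq_real, real_inner_smul_right, hin,
          norm_smul, hn1, Real.norm_eq_abs, Real.norm_eq_abs,
          abs_of_nonneg (norm_nonneg k)]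
        norm_num; ring
      rw [SphereAux.rpow_of_sq hsq, Real.mul_rpow (by positivity) (by nlinarith),
        ← SphereAux.rpow_of_sq (rfl : ‖k‖^2 = ‖k‖^2) p]
  -- LHS
  have hL1 : (∫ n, g (khatDot k n) * (‖kplus k n‖ ^ p + ‖kminus k n‖ ^ p) ∂μ)
      = ‖k‖ ^ p * ∫ n, g ⟪u, (n : Rd d)⟫ * F ⟪u, (n : Rd d)⟫ ∂μ := by
    rw [← integral_const_mul]
    apply integral_congr_ae
    filter_upwards with n
    rw [(hnormpm n).1, (hnormpm n).2, hdot n, hF]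
    ring
  -- invariance
  have hR : (Submodule.reflection (ℝ ∙ (ω - u))ᗮ) ω = u := Submodule.reflection_sub (by rw [hω, hu])
  set R := Submodule.reflection (ℝ ∙ (ω - u))ᗮ with hRdef
  have hinv : (∫ n, g ⟪ω, (n : Rd d)⟫ * F ⟪ω, (n : Rd d)⟫ ∂μ)
      = ∫ n, g ⟪u, (n : Rd d)⟫ * F ⟪u, (n : Rd d)⟫ ∂μ := by
    rw [← SphereAux.sphere_integral_comp R (fun n => g ⟪u, (n : Rd d)⟫ * F ⟪u, (n : Rd d)⟫)]
    apply integral_congr_ae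
    filter_upwards with n
    have hi : ⟪u, ((SphereAux.sphMap R n : Sd d) : Rd d)⟫ = ⟪ω, (n : Rd d)⟫ := by
      rw [SphereAux.sphMap_apply, ← hR]
      exact R.inner_map_map ω (n : Rd d)
    simp only [hi]
  -- integrability on RHS
  have hmeasω : Measurable fun n : Sd d => ⟪ω, (n : Rd d)⟫ :=
    (Continuous.inner continuous_const continuous_subtype_val).measurable
  have hFmeas : Measurable F := by
    have h1 : Continuous fun t : ℝ => ((1+t)/2) ^ (p/2) :=
      ((continuous_const.add continuous_id).div_const 2).rpow_const
        (fun x => Or.inr (by positivity))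
    have h2 : Continuous fun t : ℝ => ((1-t)/2) ^ (p/2) :=
      ((continuous_const.sub continuous_id).div_const 2).rpow_const
        (fun x => Or.inr (by positivity))
    exact (h1.add h2).measurable
  have hgint : Integrable (fun n : Sd d => g ⟪ω, (n : Rd d)⟫) μ := by
    by_contra h
    have h1 := hg_norm ω hω
    rw [integral_undef h] at h1
    norm_num at h1
  have hFbound : ∀ t : ℝ, |t| ≤ 1 → 0 ≤ F t ∧ F t ≤ 2 := by
    intro t ht
    have h1 := abs_le.1 ht
    have ha0 : (0:ℝ) ≤ (1+t)/2 := by nlinarith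
    have hb0 : (0:ℝ) ≤ (1-t)/2 := by nlinarith
    refine ⟨by rw [hF]; positivity, ?_⟩
    have ha1 : ((1+t)/2 : ℝ) ^ (p/2) ≤ 1 :=
      Real.rpow_le_one ha0 (by nlinarith) (by positivity)
    have hb1 : ((1-t)/2 : ℝ) ^ (p/2) ≤ 1 :=
      Real.rpow_le_one hb0 (by nlinarith) (by positivity)
    rw [hF]; dsimp only; linarith
  have hgFint : Integrable (fun n : Sd d => g ⟪ω, (n : Rd d)⟫ * F ⟪ω, (n : Rd d)⟫) μ := by
    apply Integrable.mono' (hgint.const_mul 2)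
    · exact ((hg_meas.comp hmeasω).mul (hFmeas.comp hmeasω)).aestronglyMeasurable
    · filter_upwards with n
      have hb := hFbound _ (key ω hω n)
      rw [Real.norm_eq_abs, abs_of_nonneg (mul_nonneg (hg_nonneg _) hb.1)]
      calc g ⟪ω, (n : Rd d)⟫ * F ⟪ω, (n : Rd d)⟫
          ≤ g ⟪ω, (n : Rd d)⟫ * 2 := mul_le_mul_of_nonneg_left hb.2 (hg_nonneg _)
        _ = 2 * g ⟪ω, (n : Rd d)⟫ := mul_comm _ _
  have hsplit : (∫ n, g ⟪ω, (n : Rd d)⟫ *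
        (1 - ((1 + ⟪ω, (n : Rd d)⟫) / 2) ^ (p / 2)
           - ((1 - ⟪ω, (n : Rd d)⟫) / 2) ^ (p / 2)) ∂μ)
      = 1 - ∫ n, g ⟪ω, (n : Rd d)⟫ * F ⟪ω, (n : Rd d)⟫ ∂μ := by
    have hnorm := hg_norm ω hω
    have hstep : (∫ n, g ⟪ω, (n : Rd d)⟫ *
        (1 - ((1 + ⟪ω, (n : Rd d)⟫) / 2) ^ (p / 2)
           - ((1 - ⟪ω, (n : Rd d)⟫) / 2) ^ (p / 2)) ∂μ)
        = (∫ n, g ⟪ω, (n : Rd d)⟫ ∂μ) - ∫ n, g ⟪ω, (n : Rd d)⟫ * F ⟪ω, (n : Rd d)⟫ ∂μ := by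
      rw [← integral_sub hgint hgFint]
      apply integral_congr_ae
      filter_upwards with n
      rw [hF]
      ring
    rw [hstep, hnorm]
  rw [hL1, hsplit, hinv]
  ring

end
end

section
/- Let A be a real d×d matrix and let φ₁, φ₂ be mild solutions with matrix A. Suppose that for some p > 0 and B > 0 the initial data satisfy |φ₁(k,0) − φ₂(k,0)| ≤ B|k|^p for all k ∈ ℝ^d. Then |φ₁(k,t) − φ₂(k,t)| ≤ B|k|^p exp(−(λ(p) − p‖A‖)t) for all k ∈ ℝ^d and t ≥ 0. -/
open MeasureTheory
open scoped Classical Matrix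
noncomputable section

open scoped RealInnerProductSpace

open scoped RealInnerProductSpace
open NormedSpace

namespace Contraction

variable {d : ℕ}

attribute [local instance] Matrix.linftyOpNormedAddCommGroup Matrix.linftyOpNormedRing
  Matrix.linftyOpNormedAlgebra

theorem my_norm_exp_le {A : Type*} [NormedRing A] [NormedAlgebra ℝ A] [CompleteSpace A]
    [NormOneClass A] (x : A) :
    ‖exp x‖ ≤ Real.exp ‖x‖ := by
  rw [exp_eq_tsum ℝ]
  calc ‖∑' n : ℕ, (n.factorial⁻¹ : ℝ) • x ^ n‖ ≤ ∑' n : ℕ, ‖(n.factorial⁻¹ : ℝ) • x ^ n‖ :=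
        norm_tsum_le_tsum_norm (norm_expSeries_summable' x)
    _ ≤ ∑' n : ℕ, ‖x‖ ^ n / n.factorial := by
        apply Summable.tsum_le_tsum _ (norm_expSeries_summable' x) (Real.summable_pow_div_factorial ‖x‖)
        intro n
        rw [norm_smul, norm_inv, RCLike.norm_natCast, div_eq_inv_mul]
        exact mul_le_mul_of_nonneg_left (norm_pow_le x n) (by positivity)
    _ = Real.exp ‖x‖ := by rw [Real.exp_eq_exp_ℝ, exp_eq_tsum_div]

/-- `matCLM` as a linear map in the matrix argument. -/
noncomputable def matL (d : ℕ) : Matrix (Fin d) (Fin d) ℝ →ₗ[ℝ] (Rd d →L[ℝ] Rd d) :=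
  (LinearMap.toContinuousLinearMap.toLinearMap).comp (Matrix.toEuclideanLin.toLinearMap)

lemma matL_apply (A : Matrix (Fin d) (Fin d) ℝ) : matL d A = matCLM A := rfl

lemma matCLM_eq_toEuclideanCLM (A : Matrix (Fin d) (Fin d) ℝ) :
    matCLM A = Matrix.toEuclideanCLM (𝕜 := ℝ) A := by
  apply ContinuousLinearMap.coe_injective
  rw [Matrix.coe_toEuclideanCLM_eq_toEuclideanLin]
  rfl

/-- `matCLM` as an algebra homomorphism. -/
noncomputable def matAH (d : ℕ) : Matrix (Fin d) (Fin d) ℝ →ₐ[ℝ] (Rd d →L[ℝ] Rd d) :=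
  AlgHom.ofLinearMap (matL d)
    (by rw [matL_apply, matCLM_eq_toEuclideanCLM, map_one])
    (by intro A B
        rw [matL_apply, matL_apply, matL_apply, matCLM_eq_toEuclideanCLM,
          matCLM_eq_toEuclideanCLM, matCLM_eq_toEuclideanCLM, map_mul])

lemma matCLM_exp (A : Matrix (Fin d) (Fin d) ℝ) (s : ℝ) :
    matCLM (exp (s • A)) = exp (s • matCLM A) := by
  have hc : Continuous (matAH d) := by
    exact (matL d).continuous_of_finiteDimensional
  have := map_exp (matAH d) hc (s • A)
  have h2 : (matAH d) (s • A) = s • matCLM A := by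
    show matL d (s • A) = s • matCLM A
    rw [LinearMap.map_smul, matL_apply]
  calc matCLM (exp (s • A)) = matAH d (exp (s • A)) := rfl
    _ = exp (s • matCLM A) := this.trans (by rw [h2])

lemma norm_expA_apply_le (hd : 0 < d) (A : Matrix (Fin d) (Fin d) ℝ) (s : ℝ) (k : Rd d) :
    ‖expA A s k‖ ≤ Real.exp (|s| * opN A) * ‖k‖ := by
  haveI : Nonempty (Fin d) := ⟨⟨0, hd⟩⟩
  haveI : Nontrivial (Rd d) := by infer_instance
  have h1 : expA A s k = exp (s • matCLM A) k := by rw [expA, matCLM_exp]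
  rw [h1]
  calc ‖(exp (s • matCLM A)) k‖ ≤ ‖exp (s • matCLM A)‖ * ‖k‖ :=
        ContinuousLinearMap.le_opNorm _ _
    _ ≤ Real.exp (|s| * opN A) * ‖k‖ := by
        apply mul_le_mul_of_nonneg_right _ (norm_nonneg k)
        calc ‖exp (s • matCLM A)‖ ≤ Real.exp ‖s • matCLM A‖ := my_norm_exp_le _
          _ = Real.exp (|s| * opN A) := by
              congr 1
              rw [show |s| = ‖s‖ from (Real.norm_eq_abs s).symm]
              exact norm_smul s (matCLM A)

lemma expA_expA (A : Matrix (Fin d) (Fin d) ℝ) (s s' : ℝ) (k : Rd d) :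
    expA A s (expA A s' k) = expA A (s + s') k := by
  letI : NormedAlgebra ℚ (Rd d →L[ℝ] Rd d) := .restrictScalars ℚ ℝ _
  have hcomm : Commute (s • matCLM A) (s' • matCLM A) := by
    show _ = _
    ext x
    simp [ContinuousLinearMap.mul_apply, _root_.map_smul, smul_smul]
    ring_nf; simp
  have hadd := exp_add_of_commute hcomm
  have hadd' : exp ((s + s') • matCLM A)
      = exp (s • matCLM A) * exp (s' • matCLM A) := by
    have h3 := add_smul s s' (matCLM A)
    rw [h3]; exact hadd
  rw [expA, expA, expA, matCLM_exp, matCLM_exp, matCLM_exp, hadd']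
  simp [ContinuousLinearMap.mul_apply]

lemma expA_zero (A : Matrix (Fin d) (Fin d) ℝ) (k : Rd d) : expA A 0 k = k := by
  rw [expA, zero_smul, exp_zero]
  show matCLM 1 k = k
  rw [matCLM_eq_toEuclideanCLM, map_one]
  rfl

lemma expA_ne_zero (A : Matrix (Fin d) (Fin d) ℝ) (s : ℝ) {k : Rd d} (hk : k ≠ 0) :
    expA A s k ≠ 0 := by
  intro h
  apply hk
  have := expA_expA A (-s) s k
  rw [h, neg_add_cancel, expA_zero] at this
  rw [← this, expA, map_zero]

lemma continuous_expA (A : Matrix (Fin d) (Fin d) ℝ) (k : Rd d) (f : ℝ → ℝ) (hf : Continuous f) :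
    Continuous (fun τ => expA A (f τ) k) := by
  letI : NormedAlgebra ℚ (Rd d →L[ℝ] Rd d) := .restrictScalars ℚ ℝ _
  have : (fun τ => expA A (f τ) k) = fun τ => (exp (f τ • matCLM A)) k := by
    funext τ; rw [expA, matCLM_exp]
  rw [this]
  exact (exp_continuous.comp ((hf.smul continuous_const))).clm_apply continuous_const


/-! ### Characteristic functions -/

lemma norm_charFun_le_one {φ : Rd d → ℂ} (h : IsCharFun φ) (k : Rd d) : ‖φ k‖ ≤ 1 := by
  obtain ⟨μ, hμ, rfl⟩ := h
  have : ∀ v : Rd d, ‖Complex.exp (-(Complex.I * ((inner ℝ k v : ℝ) : ℂ)))‖ = 1 := by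
    intro v
    rw [Complex.norm_exp]
    simp
  calc ‖_root_.charFun μ k‖ ≤ 1 * (μ Set.univ).toReal := by
        apply norm_integral_le_of_norm_le_const
        filter_upwards with v using le_of_eq (this v)
    _ = 1 := by simp
  
lemma continuous_of_isCharFun {φ : Rd d → ℂ} (h : IsCharFun φ) : Continuous φ := by
  obtain ⟨μ, hμ, rfl⟩ := h
  apply continuous_of_dominated (bound := fun _ => (1:ℝ))
  · intro k
    apply Continuous.aestronglyMeasurable
    exact Complex.continuous_exp.comp
      ((continuous_const.mul (Complex.continuous_ofReal.comp
        (continuous_const.inner continuous_id))).neg)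
  · intro k
    filter_upwards with v
    rw [Complex.norm_exp]
    simp
  · exact integrable_const 1
  · filter_upwards with v
    exact Complex.continuous_exp.comp
      ((continuous_const.mul (Complex.continuous_ofReal.comp
        (continuous_id.inner continuous_const))).neg)

/-! ### Sphere geometry -/

lemma norm_unitVec {k : Rd d} (hk : k ≠ 0) : ‖(‖k‖⁻¹ • k : Rd d)‖ = 1 := by
  rw [norm_smul, norm_inv, norm_norm]
  exact inv_mul_cancel₀ (norm_ne_zero_iff.mpr hk)

lemma abs_khatDot_le {k : Rd d} (hk : k ≠ 0) (n : Sd d) : |khatDot k n| ≤ 1 := by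
  have hn : ‖(n : Rd d)‖ = 1 := mem_sphere_zero_iff_norm.mp n.2
  calc |khatDot k n| ≤ ‖(‖k‖⁻¹ • k : Rd d)‖ * ‖(n : Rd d)‖ := abs_real_inner_le_norm _ _
    _ = 1 := by rw [norm_unitVec hk, hn, one_mul]

lemma inner_eq_khatDot {k : Rd d} (hk : k ≠ 0) (n : Sd d) :
    ⟪k, (n : Rd d)⟫ = ‖k‖ * khatDot k n := by
  rw [khatDot, real_inner_smul_left]
  have : ‖k‖ ≠ 0 := norm_ne_zero_iff.mpr hk
  field_simp

lemma norm_kplus_rpow {p : ℝ} (hp : 0 < p) {k : Rd d} (hk : k ≠ 0) (n : Sd d) :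
    ‖kplus k n‖ ^ p = ‖k‖ ^ p * ((1 + khatDot k n) / 2) ^ (p / 2) := by
  have hn : ‖(n : Rd d)‖ = 1 := mem_sphere_zero_iff_norm.mp n.2
  have hs := abs_khatDot_le hk n
  have hc : (0:ℝ) ≤ (1 + khatDot k n) / 2 := by
    have := neg_le_of_abs_le hs; linarith
  have h2 : ‖kplus k n‖ ^ (2:ℕ) = ‖k‖ ^ (2:ℕ) * ((1 + khatDot k n) / 2) := by
    rw [kplus, norm_smul]
    rw [mul_pow, norm_add_sq_real, real_inner_smul_right, inner_eq_khatDot hk, norm_smul,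
      norm_norm, hn]
    have : ‖(2:ℝ)⁻¹‖ = 2⁻¹ := by norm_num
    rw [this]
    ring
  have hnorm : ‖kplus k n‖ = ‖k‖ * Real.sqrt ((1 + khatDot k n) / 2) := by
    have := congrArg Real.sqrt h2
    rw [Real.sqrt_sq (norm_nonneg _)] at this
    rw [this, Real.sqrt_mul (sq_nonneg _), Real.sqrt_sq (norm_nonneg _)]
  rw [hnorm, Real.mul_rpow (norm_nonneg _) (Real.sqrt_nonneg _), Real.sqrt_eq_rpow,
    ← Real.rpow_mul hc]
  ring_nf

lemma norm_kminus_rpow {p : ℝ} (hp : 0 < p) {k : Rd d} (hk : k ≠ 0) (n : Sd d) :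
    ‖kminus k n‖ ^ p = ‖k‖ ^ p * ((1 - khatDot k n) / 2) ^ (p / 2) := by
  have hn : ‖(n : Rd d)‖ = 1 := mem_sphere_zero_iff_norm.mp n.2
  have hs := abs_khatDot_le hk n
  have hc : (0:ℝ) ≤ (1 - khatDot k n) / 2 := by
    have := le_of_abs_le hs; linarith
  have h2 : ‖kminus k n‖ ^ (2:ℕ) = ‖k‖ ^ (2:ℕ) * ((1 - khatDot k n) / 2) := by
    rw [kminus, norm_smul]
    rw [mul_pow, norm_sub_sq_real, real_inner_smul_right, inner_eq_khatDot hk, norm_smul,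
      norm_norm, hn]
    have : ‖(2:ℝ)⁻¹‖ = 2⁻¹ := by norm_num
    rw [this]
    ring
  have hnorm : ‖kminus k n‖ = ‖k‖ * Real.sqrt ((1 - khatDot k n) / 2) := by
    have := congrArg Real.sqrt h2
    rw [Real.sqrt_sq (norm_nonneg _)] at this
    rw [this, Real.sqrt_mul (sq_nonneg _), Real.sqrt_sq (norm_nonneg _)]
  rw [hnorm, Real.mul_rpow (norm_nonneg _) (Real.sqrt_nonneg _), Real.sqrt_eq_rpow,
    ← Real.rpow_mul hc]
  ring_nf


/-! ### Integrals over the sphere -/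

lemma g_integrable {g : ℝ → ℝ}
    (hg_norm : ∀ ω : Rd d, ‖ω‖ = 1 → ∫ n, g ⟪ω, (n : Rd d)⟫ ∂(sphMeasure d) = 1)
    {ω : Rd d} (hω : ‖ω‖ = 1) :
    Integrable (fun n : Sd d => g ⟪ω, (n : Rd d)⟫) (sphMeasure d) := by
  by_contra h
  have h1 := hg_norm ω hω
  rw [integral_undef h] at h1
  exact zero_ne_one h1

/-- Ψ(s) = ((1+s)/2)^{p/2} + ((1-s)/2)^{p/2}. -/
noncomputable def psi (p s : ℝ) : ℝ := ((1 + s) / 2) ^ (p / 2) + ((1 - s) / 2) ^ (p / 2)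

lemma psi_continuous {p : ℝ} (hp : 0 < p) : Continuous (psi p) := by
  have h2 : (0:ℝ) ≤ p / 2 := by linarith
  apply Continuous.add
  · exact (((continuous_const.add continuous_id).div_const 2)).rpow_const (fun _ => Or.inr h2)
  · exact (((continuous_const.sub continuous_id).div_const 2)).rpow_const (fun _ => Or.inr h2)

lemma psi_nonneg {p s : ℝ} (hs : |s| ≤ 1) : 0 ≤ psi p s := by
  have h1 : (0:ℝ) ≤ (1 + s) / 2 := by have := neg_le_of_abs_le hs; linarith
  have h2 : (0:ℝ) ≤ (1 - s) / 2 := by have := le_of_abs_le hs; linarith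
  exact add_nonneg (Real.rpow_nonneg h1 _) (Real.rpow_nonneg h2 _)

lemma psi_le_two {p s : ℝ} (hp : 0 < p) (hs : |s| ≤ 1) : psi p s ≤ 2 := by
  have h1 : (0:ℝ) ≤ (1 + s) / 2 := by have := neg_le_of_abs_le hs; linarith
  have h2 : (0:ℝ) ≤ (1 - s) / 2 := by have := le_of_abs_le hs; linarith
  have h1' : (1 + s) / 2 ≤ 1 := by have := le_of_abs_le hs; linarith
  have h2' : (1 - s) / 2 ≤ 1 := by have := neg_le_of_abs_le hs; linarith
  have hp2 : (0:ℝ) ≤ p / 2 := by linarith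
  have := Real.rpow_le_one h1 h1' hp2
  have := Real.rpow_le_one h2 h2' hp2
  unfold psi; linarith

lemma abs_inner_unit_le {ω : Rd d} (hω : ‖ω‖ = 1) (n : Sd d) : |⟪ω, (n : Rd d)⟫| ≤ 1 := by
  have hn : ‖(n : Rd d)‖ = 1 := mem_sphere_zero_iff_norm.mp n.2
  calc |⟪ω, (n : Rd d)⟫| ≤ ‖ω‖ * ‖(n : Rd d)‖ := abs_real_inner_le_norm _ _
    _ = 1 := by rw [hω, hn, one_mul]

lemma g_psi_integrable {g : ℝ → ℝ} {p : ℝ} (hp : 0 < p) (hg_meas : Measurable g)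
    (hg_nonneg : ∀ x, 0 ≤ g x)
    (hg_norm : ∀ ω : Rd d, ‖ω‖ = 1 → ∫ n, g ⟪ω, (n : Rd d)⟫ ∂(sphMeasure d) = 1)
    {ω : Rd d} (hω : ‖ω‖ = 1) :
    Integrable (fun n : Sd d => g ⟪ω, (n : Rd d)⟫ * psi p ⟪ω, (n : Rd d)⟫) (sphMeasure d) := by
  have hfint := g_integrable hg_norm hω
  have hinner : Continuous fun n : Sd d => ⟪ω, (n : Rd d)⟫ :=
    continuous_const.inner continuous_subtype_val
  have haesm : AEStronglyMeasurable
      (fun n : Sd d => g ⟪ω, (n : Rd d)⟫ * psi p ⟪ω, (n : Rd d)⟫) (sphMeasure d) :=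
    hfint.aestronglyMeasurable.mul ((psi_continuous hp).comp hinner).aestronglyMeasurable
  apply Integrable.mono' (hfint.const_mul 2) haesm
  filter_upwards with n
  have hs := abs_inner_unit_le hω n
  rw [Real.norm_eq_abs, abs_mul, abs_of_nonneg (hg_nonneg _), abs_of_nonneg (psi_nonneg hs)]
  calc g ⟪ω, (n : Rd d)⟫ * psi p ⟪ω, (n : Rd d)⟫ ≤ g ⟪ω, (n : Rd d)⟫ * 2 :=
        mul_le_mul_of_nonneg_left (psi_le_two hp hs) (hg_nonneg _)
    _ = 2 * g ⟪ω, (n : Rd d)⟫ := by ring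

lemma integral_g_psi {g : ℝ → ℝ} {p lam : ℝ} (hp : 0 < p) (hg_meas : Measurable g)
    (hg_nonneg : ∀ x, 0 ≤ g x)
    (hg_norm : ∀ ω : Rd d, ‖ω‖ = 1 → ∫ n, g ⟪ω, (n : Rd d)⟫ ∂(sphMeasure d) = 1)
    (hlam : ∀ ω : Rd d, ‖ω‖ = 1 →
      (∫ n, g ⟪ω, (n : Rd d)⟫ *
          (1 - ((1 + ⟪ω, (n : Rd d)⟫) / 2) ^ (p / 2)
             - ((1 - ⟪ω, (n : Rd d)⟫) / 2) ^ (p / 2)) ∂(sphMeasure d)) = lam)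
    {ω : Rd d} (hω : ‖ω‖ = 1) :
    ∫ n, g ⟪ω, (n : Rd d)⟫ * psi p ⟪ω, (n : Rd d)⟫ ∂(sphMeasure d) = 1 - lam := by
  have hfint := g_integrable hg_norm hω
  have hint2 := g_psi_integrable hp hg_meas hg_nonneg hg_norm hω
  have hkey : (fun n : Sd d => g ⟪ω, (n : Rd d)⟫ *
      (1 - ((1 + ⟪ω, (n : Rd d)⟫) / 2) ^ (p / 2) - ((1 - ⟪ω, (n : Rd d)⟫) / 2) ^ (p / 2)))
      = fun n : Sd d => g ⟪ω, (n : Rd d)⟫ - g ⟪ω, (n : Rd d)⟫ * psi p ⟪ω, (n : Rd d)⟫ := by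
    funext n; unfold psi; ring
  have h1 := hlam ω hω
  rw [hkey, integral_sub hfint hint2, hg_norm ω hω] at h1
  linarith

lemma one_sub_lam_nonneg {g : ℝ → ℝ} {p lam : ℝ} (hp : 0 < p) (hg_meas : Measurable g)
    (hg_nonneg : ∀ x, 0 ≤ g x)
    (hg_norm : ∀ ω : Rd d, ‖ω‖ = 1 → ∫ n, g ⟪ω, (n : Rd d)⟫ ∂(sphMeasure d) = 1)
    (hlam : ∀ ω : Rd d, ‖ω‖ = 1 →
      (∫ n, g ⟪ω, (n : Rd d)⟫ *
          (1 - ((1 + ⟪ω, (n : Rd d)⟫) / 2) ^ (p / 2)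
             - ((1 - ⟪ω, (n : Rd d)⟫) / 2) ^ (p / 2)) ∂(sphMeasure d)) = lam)
    (hd : 0 < d) : 0 ≤ 1 - lam := by
  haveI : Nonempty (Fin d) := ⟨⟨0, hd⟩⟩
  haveI : Nontrivial (Rd d) := inferInstance
  have hne : (Metric.sphere (0 : Rd d) 1).Nonempty :=
    NormedSpace.sphere_nonempty.mpr (by norm_num)
  obtain ⟨ω, hω⟩ := hne
  have hω' : ‖ω‖ = 1 := mem_sphere_zero_iff_norm.mp hω
  rw [← integral_g_psi hp hg_meas hg_nonneg hg_norm hlam hω']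
  apply integral_nonneg
  intro n
  exact mul_nonneg (hg_nonneg _) (psi_nonneg (abs_inner_unit_le hω' n))

/-! ### Bounds for the gain operator -/

lemma continuous_kplus (q : Rd d) : Continuous fun n : Sd d => kplus q n := by
  unfold kplus
  exact ((continuous_const.add ((continuous_subtype_val : Continuous fun n : Sd d => (n : Rd d)).const_smul ‖q‖)).const_smul (2⁻¹ : ℝ))

lemma continuous_kminus (q : Rd d) : Continuous fun n : Sd d => kminus q n := by
  unfold kminus
  exact ((continuous_const.sub ((continuous_subtype_val : Continuous fun n : Sd d => (n : Rd d)).const_smul ‖q‖)).const_smul (2⁻¹ : ℝ))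

lemma g_cplx_aesm {g : ℝ → ℝ} (hg_meas : Measurable g) {q : Rd d} (hq : q ≠ 0) :
    AEStronglyMeasurable (fun n : Sd d => ((g (khatDot q n) : ℝ) : ℂ)) (sphMeasure d) := by
  apply Measurable.aestronglyMeasurable
  apply Complex.measurable_ofReal.comp
  apply hg_meas.comp
  exact (continuous_const.inner continuous_subtype_val).measurable

lemma gam_integrand_integrable {g : ℝ → ℝ} (hg_meas : Measurable g) (hg_nonneg : ∀ x, 0 ≤ g x)
    (hg_norm : ∀ ω : Rd d, ‖ω‖ = 1 → ∫ n, g ⟪ω, (n : Rd d)⟫ ∂(sphMeasure d) = 1)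
    {φ ψ : Rd d → ℂ} (hφ1 : ∀ x, ‖φ x‖ ≤ 1) (hψ1 : ∀ x, ‖ψ x‖ ≤ 1)
    (hφc : Continuous φ) (hψc : Continuous ψ) {q : Rd d} (hq : q ≠ 0) :
    Integrable (fun n : Sd d => ((g (khatDot q n) : ℝ) : ℂ) * φ (kplus q n) * ψ (kminus q n))
      (sphMeasure d) := by
  have hfint := g_integrable hg_norm (norm_unitVec hq)
  have haesm : AEStronglyMeasurable
      (fun n : Sd d => ((g (khatDot q n) : ℝ) : ℂ) * φ (kplus q n) * ψ (kminus q n))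
      (sphMeasure d) :=
    ((g_cplx_aesm hg_meas hq).mul
      ((hφc.comp (continuous_kplus q)).aestronglyMeasurable)).mul
      ((hψc.comp (continuous_kminus q)).aestronglyMeasurable)
  apply Integrable.mono' hfint haesm
  filter_upwards with n
  rw [norm_mul, norm_mul, Complex.norm_real, Real.norm_eq_abs, abs_of_nonneg (hg_nonneg _)]
  calc g (khatDot q n) * ‖φ (kplus q n)‖ * ‖ψ (kminus q n)‖
      ≤ g (khatDot q n) * 1 * 1 := by
        apply mul_le_mul (mul_le_mul_of_nonneg_left (hφ1 _) (hg_nonneg _)) (hψ1 _)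
          (norm_nonneg _)
        exact mul_nonneg (hg_nonneg _) zero_le_one
    _ = g (khatDot q n) := by ring

lemma gam_norm_le {g : ℝ → ℝ} (hg_meas : Measurable g) (hg_nonneg : ∀ x, 0 ≤ g x)
    (hg_norm : ∀ ω : Rd d, ‖ω‖ = 1 → ∫ n, g ⟪ω, (n : Rd d)⟫ ∂(sphMeasure d) = 1)
    {φ : Rd d → ℂ} (hφ1 : ∀ x, ‖φ x‖ ≤ 1) (hφc : Continuous φ) (q : Rd d) :
    ‖Gam g φ q‖ ≤ 1 := by
  rw [Gam, Iplus]
  by_cases hq : q = 0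
  · rw [if_pos hq, norm_mul]
    exact mul_le_one₀ (hφ1 _) (norm_nonneg _) (hφ1 _)
  · rw [if_neg hq]
    have hfint := g_integrable hg_norm (norm_unitVec hq)
    calc ‖∫ n, ((g (khatDot q n) : ℝ) : ℂ) * φ (kplus q n) * φ (kminus q n) ∂(sphMeasure d)‖
        ≤ ∫ n, g (khatDot q n) ∂(sphMeasure d) := by
          apply norm_integral_le_of_norm_le hfint
          filter_upwards with n
          rw [norm_mul, norm_mul, Complex.norm_real, Real.norm_eq_abs,
            abs_of_nonneg (hg_nonneg _)]
          calc g (khatDot q n) * ‖φ (kplus q n)‖ * ‖φ (kminus q n)‖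
              ≤ g (khatDot q n) * 1 * 1 := by
                apply mul_le_mul (mul_le_mul_of_nonneg_left (hφ1 _) (hg_nonneg _)) (hφ1 _)
                  (norm_nonneg _)
                exact mul_nonneg (hg_nonneg _) zero_le_one
            _ = g (khatDot q n) := by ring
      _ = 1 := hg_norm _ (norm_unitVec hq)

/-- Key contraction bound for the difference of two gain terms. -/
lemma gam_diff_le {g : ℝ → ℝ} {p lam : ℝ} (hp : 0 < p)
    (hg_meas : Measurable g) (hg_nonneg : ∀ x, 0 ≤ g x)
    (hg_norm : ∀ ω : Rd d, ‖ω‖ = 1 → ∫ n, g ⟪ω, (n : Rd d)⟫ ∂(sphMeasure d) = 1)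
    (hlam : ∀ ω : Rd d, ‖ω‖ = 1 →
      (∫ n, g ⟪ω, (n : Rd d)⟫ *
          (1 - ((1 + ⟪ω, (n : Rd d)⟫) / 2) ^ (p / 2)
             - ((1 - ⟪ω, (n : Rd d)⟫) / 2) ^ (p / 2)) ∂(sphMeasure d)) = lam)
    {φ ψ : Rd d → ℂ} (hφ1 : ∀ x, ‖φ x‖ ≤ 1) (hψ1 : ∀ x, ‖ψ x‖ ≤ 1)
    (hφc : Continuous φ) (hψc : Continuous ψ)
    {M c : ℝ} (hM : 0 ≤ M) (hc : 0 ≤ c)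
    (hβ : ∀ x : Rd d, ‖φ x - ψ x‖ ≤ M * ‖x‖ ^ p + c) (q : Rd d) :
    ‖Gam g φ q - Gam g ψ q‖ ≤ M * (1 - lam) * ‖q‖ ^ p + 2 * c := by
  rw [Gam, Gam, Iplus, Iplus]
  by_cases hq : q = 0
  · rw [if_pos hq, if_pos hq, hq]
    have h00 : ‖(0 : Rd d)‖ ^ p = 0 := by
      rw [norm_zero]; exact Real.zero_rpow (ne_of_gt hp)
    rw [h00]
    have key : φ 0 * φ 0 - ψ 0 * ψ 0 = φ 0 * (φ 0 - ψ 0) + (φ 0 - ψ 0) * ψ 0 := by ring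
    have hβ0 : ‖φ 0 - ψ 0‖ ≤ c := by
      have := hβ 0
      rw [h00] at this; linarith
    calc ‖φ 0 * φ 0 - ψ 0 * ψ 0‖ ≤ ‖φ 0 * (φ 0 - ψ 0)‖ + ‖(φ 0 - ψ 0) * ψ 0‖ := by
          rw [key]; exact norm_add_le _ _
      _ ≤ 1 * c + c * 1 := by
          rw [norm_mul, norm_mul]
          gcongr
          · exact hφ1 0
          · exact hψ1 0
      _ ≤ M * (1 - lam) * 0 + 2 * c := by linarith
  · rw [if_neg hq, if_neg hq]
    set ω : Rd d := ‖q‖⁻¹ • q with hω_def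
    have hω : ‖ω‖ = 1 := norm_unitVec hq
    have hkd : ∀ n : Sd d, khatDot q n = ⟪ω, (n : Rd d)⟫ := fun n => rfl
    have hX := gam_integrand_integrable hg_meas hg_nonneg hg_norm hφ1 hφ1 hφc hφc hq
    have hY := gam_integrand_integrable hg_meas hg_nonneg hg_norm hψ1 hψ1 hψc hψc hq
    rw [← integral_sub hX hY]
    have hfint := g_integrable hg_norm hω
    have hψint := g_psi_integrable hp hg_meas hg_nonneg hg_norm hω
    have hbnd_int : Integrable (fun n : Sd d =>
        M * ‖q‖ ^ p * (g ⟪ω, (n : Rd d)⟫ * psi p ⟪ω, (n : Rd d)⟫)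
          + 2 * c * g ⟪ω, (n : Rd d)⟫) (sphMeasure d) :=
      (hψint.const_mul _).add (hfint.const_mul _)
    calc ‖∫ n, (((g (khatDot q n) : ℝ) : ℂ) * φ (kplus q n) * φ (kminus q n)
            - ((g (khatDot q n) : ℝ) : ℂ) * ψ (kplus q n) * ψ (kminus q n)) ∂(sphMeasure d)‖
        ≤ ∫ n, (M * ‖q‖ ^ p * (g ⟪ω, (n : Rd d)⟫ * psi p ⟪ω, (n : Rd d)⟫)
            + 2 * c * g ⟪ω, (n : Rd d)⟫) ∂(sphMeasure d) := by
          apply norm_integral_le_of_norm_le hbnd_int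
          filter_upwards with n
          have hgn := hg_nonneg (khatDot q n)
          have key : ((g (khatDot q n) : ℝ) : ℂ) * φ (kplus q n) * φ (kminus q n)
              - ((g (khatDot q n) : ℝ) : ℂ) * ψ (kplus q n) * ψ (kminus q n)
              = ((g (khatDot q n) : ℝ) : ℂ) * (φ (kplus q n) * (φ (kminus q n) - ψ (kminus q n))
                + (φ (kplus q n) - ψ (kplus q n)) * ψ (kminus q n)) := by ring
          rw [key, norm_mul, Complex.norm_real, Real.norm_eq_abs, abs_of_nonneg hgn]
          have hstep : ‖φ (kplus q n) * (φ (kminus q n) - ψ (kminus q n))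
              + (φ (kplus q n) - ψ (kplus q n)) * ψ (kminus q n)‖
              ≤ (M * ‖kminus q n‖ ^ p + c) + (M * ‖kplus q n‖ ^ p + c) := by
            calc ‖φ (kplus q n) * (φ (kminus q n) - ψ (kminus q n))
                + (φ (kplus q n) - ψ (kplus q n)) * ψ (kminus q n)‖
                ≤ ‖φ (kplus q n)‖ * ‖φ (kminus q n) - ψ (kminus q n)‖
                  + ‖φ (kplus q n) - ψ (kplus q n)‖ * ‖ψ (kminus q n)‖ := by
                  refine le_trans (norm_add_le _ _) ?_
                  rw [norm_mul, norm_mul]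
              _ ≤ 1 * (M * ‖kminus q n‖ ^ p + c) + (M * ‖kplus q n‖ ^ p + c) * 1 := by
                  apply add_le_add
                  · exact mul_le_mul (hφ1 _) (hβ _) (norm_nonneg _) zero_le_one
                  · exact mul_le_mul (hβ _) (hψ1 _) (norm_nonneg _)
                      (add_nonneg (mul_nonneg hM (Real.rpow_nonneg (norm_nonneg _) _)) hc)
              _ = (M * ‖kminus q n‖ ^ p + c) + (M * ‖kplus q n‖ ^ p + c) := by ring
          calc g (khatDot q n) * ‖φ (kplus q n) * (φ (kminus q n) - ψ (kminus q n))
                + (φ (kplus q n) - ψ (kplus q n)) * ψ (kminus q n)‖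
              ≤ g (khatDot q n) * ((M * ‖kminus q n‖ ^ p + c) + (M * ‖kplus q n‖ ^ p + c)) :=
                mul_le_mul_of_nonneg_left hstep hgn
            _ = M * ‖q‖ ^ p * (g ⟪ω, (n : Rd d)⟫ * psi p ⟪ω, (n : Rd d)⟫)
                + 2 * c * g ⟪ω, (n : Rd d)⟫ := by
                rw [norm_kplus_rpow hp hq n, norm_kminus_rpow hp hq n]
                simp only [hkd]
                unfold psi
                ring
      _ = M * (1 - lam) * ‖q‖ ^ p + 2 * c := by
          rw [integral_add (hψint.const_mul _) (hfint.const_mul _), integral_const_mul _ _, integral_const_mul _ _,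
            integral_g_psi hp hg_meas hg_nonneg hg_norm hlam hω, hg_norm ω hω]
          ring

/-! ### Measurability in time for mild solutions -/

/-- Pointwise-in-time continuity of `τ ↦ φ τ y` on `[0,∞)`. -/
lemma contOn_phi_eval {φ : ℝ → Rd d → ℂ}
    (hucont : ∀ t, 0 ≤ t → ∀ ε > (0:ℝ), ∃ δ > (0:ℝ), ∀ s, 0 ≤ s → |s - t| < δ →
      ∀ k, ‖φ s k - φ t k‖ ≤ ε) (y : Rd d) :
    ContinuousOn (fun τ => φ τ y) (Set.Ici (0:ℝ)) := by
  intro t₀ ht₀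
  rw [Metric.continuousWithinAt_iff]
  intro ε hε
  obtain ⟨δ, hδ, hδ'⟩ := hucont t₀ ht₀ (ε / 2) (by linarith)
  refine ⟨δ, hδ, ?_⟩
  intro s hs hdist
  rw [Real.dist_eq] at hdist
  calc dist (φ s y) (φ t₀ y) = ‖φ s y - φ t₀ y‖ := dist_eq_norm _ _
    _ ≤ ε / 2 := hδ' s hs hdist y
    _ < ε := by linarith

/-- Joint continuity of `(τ,n) ↦ φ τ (x τ n)` on `[0,∞) × S^{d-1}`. -/
lemma contOn_phi_comp {φ : ℝ → Rd d → ℂ}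
    (hchar : ∀ t, 0 ≤ t → IsCharFun (φ t))
    (hucont : ∀ t, 0 ≤ t → ∀ ε > (0:ℝ), ∃ δ > (0:ℝ), ∀ s, 0 ≤ s → |s - t| < δ →
      ∀ k, ‖φ s k - φ t k‖ ≤ ε)
    {x : ℝ × Sd d → Rd d} (hx : Continuous x) :
    ContinuousOn (fun pr : ℝ × Sd d => φ pr.1 (x pr)) (Set.Ici (0:ℝ) ×ˢ Set.univ) := by
  intro p₀ hp₀
  obtain ⟨ht₀, -⟩ := hp₀
  have hc₀ : Continuous (φ p₀.1) := continuous_of_isCharFun (hchar p₀.1 ht₀)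
  have hsplit : (fun pr : ℝ × Sd d => φ pr.1 (x pr))
      = (fun pr : ℝ × Sd d => (φ pr.1 (x pr) - φ p₀.1 (x pr))) + fun pr => φ p₀.1 (x pr) := by
    funext pr; simp
  rw [ContinuousWithinAt, hsplit]
  have h2 : Filter.Tendsto (fun pr : ℝ × Sd d => φ p₀.1 (x pr))
      (nhdsWithin p₀ (Set.Ici (0:ℝ) ×ˢ Set.univ)) (nhds (φ p₀.1 (x p₀))) :=
    ((hc₀.comp hx).tendsto p₀).mono_left nhdsWithin_le_nhds
  have h1 : Filter.Tendsto (fun pr : ℝ × Sd d => φ pr.1 (x pr) - φ p₀.1 (x pr))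
      (nhdsWithin p₀ (Set.Ici (0:ℝ) ×ˢ Set.univ)) (nhds 0) := by
    rw [NormedAddCommGroup.tendsto_nhds_zero]
    intro ε hε
    obtain ⟨δ, hδ, hδ'⟩ := hucont p₀.1 ht₀ (ε / 2) (by linarith)
    have hoev : ∀ᶠ pr : ℝ × Sd d in nhds p₀, |pr.1 - p₀.1| < δ := by
      have hopen : IsOpen {pr : ℝ × Sd d | |pr.1 - p₀.1| < δ} := by
        have : Continuous fun pr : ℝ × Sd d => |pr.1 - p₀.1| :=
          (continuous_fst.sub continuous_const).abs
        exact isOpen_lt this continuous_const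
      exact hopen.eventually_mem (by simp [abs_of_nonneg, hδ])
    have hmem : ∀ᶠ pr : ℝ × Sd d in nhdsWithin p₀ (Set.Ici (0:ℝ) ×ˢ Set.univ),
        pr ∈ Set.Ici (0:ℝ) ×ˢ Set.univ := self_mem_nhdsWithin
    filter_upwards [hoev.filter_mono nhdsWithin_le_nhds, hmem] with pr h₁ h₂
    calc ‖φ pr.1 (x pr) - φ p₀.1 (x pr)‖ ≤ ε / 2 := hδ' pr.1 h₂.1 h₁ (x pr)
      _ < ε := by linarith
  have h3 := h1.add h2
  rw [zero_add] at h3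
  refine h3.congr (fun pr => ?_) 
  simp

instance sphMeasure_finite : IsFiniteMeasure (sphMeasure d) := by
  unfold sphMeasure; infer_instance

lemma expA_map_zero (A : Matrix (Fin d) (Fin d) ℝ) (s : ℝ) : expA A s (0 : Rd d) = 0 := by
  rw [expA, map_zero]

/-- The integrand of the Duhamel formula is interval integrable in time. -/
lemma F_intervalIntegrable {g : ℝ → ℝ} (hg_meas : Measurable g) (hg_nonneg : ∀ x, 0 ≤ g x)
    (hg_norm : ∀ ω : Rd d, ‖ω‖ = 1 → ∫ n, g ⟪ω, (n : Rd d)⟫ ∂(sphMeasure d) = 1)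
    (A : Matrix (Fin d) (Fin d) ℝ) {φ : ℝ → Rd d → ℂ}
    (hchar : ∀ t, 0 ≤ t → IsCharFun (φ t))
    (hucont : ∀ t, 0 ≤ t → ∀ ε > (0:ℝ), ∃ δ > (0:ℝ), ∀ s, 0 ≤ s → |s - t| < δ →
      ∀ k, ‖φ s k - φ t k‖ ≤ ε)
    {t : ℝ} (ht : 0 ≤ t) (k : Rd d) :
    IntervalIntegrable
      (fun τ => (Real.exp (-(t - τ)) : ℂ) * Gam g (φ τ) (expA A (-(t - τ)) k)) volume 0 t := by
  set q : ℝ → Rd d := fun τ => expA A (-(t - τ)) k with hq_def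
  have hq_cont : Continuous q := by
    apply continuous_expA
    continuity
  -- First: a.e. strong measurability on (0, t]
  have haesm : AEStronglyMeasurable (fun τ => Gam g (φ τ) (q τ))
      (volume.restrict (Set.Ioc 0 t)) := by
    by_cases hk : k = 0
    · have hq0 : ∀ τ, q τ = 0 := fun τ => by rw [hq_def]; simp [hk, expA_map_zero]
      have heq : (fun τ => Gam g (φ τ) (q τ)) = fun τ => φ τ 0 * φ τ 0 := by
        funext τ; rw [hq0 τ, Gam, Iplus, if_pos rfl]
      rw [heq]
      have hcont : ContinuousOn (fun τ => φ τ 0 * φ τ 0) (Set.Ici (0:ℝ)) :=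
        (contOn_phi_eval hucont 0).mul (contOn_phi_eval hucont 0)
      exact ((hcont.mono (fun x hx => le_of_lt hx.1)).aestronglyMeasurable measurableSet_Ioc)
    · have hqne : ∀ τ, q τ ≠ 0 := fun τ => expA_ne_zero A _ hk
      have heq : (fun τ => Gam g (φ τ) (q τ)) = fun τ =>
          ∫ n, ((g (khatDot (q τ) n) : ℝ) : ℂ) * φ τ (kplus (q τ) n) * φ τ (kminus (q τ) n)
            ∂(sphMeasure d) := by
        funext τ; rw [Gam, Iplus, if_neg (hqne τ)]
      rw [heq]
      apply AEStronglyMeasurable.integral_prod_right'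
        (f := fun pr : ℝ × Sd d => ((g (khatDot (q pr.1) pr.2) : ℝ) : ℂ)
          * φ pr.1 (kplus (q pr.1) pr.2) * φ pr.1 (kminus (q pr.1) pr.2))
      -- joint a.e. strong measurability on the product
      have hωc : Continuous fun τ => (‖q τ‖⁻¹ • q τ : Rd d) :=
        (hq_cont.norm.inv₀ fun τ => norm_ne_zero_iff.mpr (hqne τ)).smul hq_cont
      have hinner_c : Continuous fun pr : ℝ × Sd d => khatDot (q pr.1) pr.2 := by
        have : (fun pr : ℝ × Sd d => khatDot (q pr.1) pr.2)
            = fun pr : ℝ × Sd d => ⟪(‖q pr.1‖⁻¹ • q pr.1 : Rd d), (pr.2 : Rd d)⟫ := rfl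
        rw [this]
        exact (hωc.comp continuous_fst).inner (continuous_subtype_val.comp continuous_snd)
      have hg_aesm : AEStronglyMeasurable
          (fun pr : ℝ × Sd d => ((g (khatDot (q pr.1) pr.2) : ℝ) : ℂ))
          ((volume.restrict (Set.Ioc 0 t)).prod (sphMeasure d)) :=
        (Complex.measurable_ofReal.comp (hg_meas.comp hinner_c.measurable)).aestronglyMeasurable
      have hkplus_c : Continuous fun pr : ℝ × Sd d => kplus (q pr.1) pr.2 := by
        unfold kplus
        exact (((hq_cont.comp continuous_fst).add
          ((hq_cont.norm.comp continuous_fst).smul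
            (continuous_subtype_val.comp continuous_snd)))).const_smul (2⁻¹ : ℝ)
      have hkminus_c : Continuous fun pr : ℝ × Sd d => kminus (q pr.1) pr.2 := by
        unfold kminus
        exact (((hq_cont.comp continuous_fst).sub
          ((hq_cont.norm.comp continuous_fst).smul
            (continuous_subtype_val.comp continuous_snd)))).const_smul (2⁻¹ : ℝ)
      have hplus_aesm : AEStronglyMeasurable
          (fun pr : ℝ × Sd d => φ pr.1 (kplus (q pr.1) pr.2))
          ((volume.restrict (Set.Ioc 0 t)).prod (sphMeasure d)) := by
        have hco := contOn_phi_comp hchar hucont hkplus_c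
        have h1 : AEStronglyMeasurable (fun pr : ℝ × Sd d => φ pr.1 (kplus (q pr.1) pr.2))
            ((volume.prod (sphMeasure d)).restrict
              ((Set.Ioc (0:ℝ) t) ×ˢ (Set.univ : Set (Sd d)))) :=
          (hco.mono (Set.prod_mono (fun x hx => le_of_lt hx.1) le_rfl)).aestronglyMeasurable
            (measurableSet_Ioc.prod MeasurableSet.univ)
        rw [← Measure.prod_restrict, Measure.restrict_univ] at h1
        exact h1
      have hminus_aesm : AEStronglyMeasurable
          (fun pr : ℝ × Sd d => φ pr.1 (kminus (q pr.1) pr.2))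
          ((volume.restrict (Set.Ioc 0 t)).prod (sphMeasure d)) := by
        have hco := contOn_phi_comp hchar hucont hkminus_c
        have h1 : AEStronglyMeasurable (fun pr : ℝ × Sd d => φ pr.1 (kminus (q pr.1) pr.2))
            ((volume.prod (sphMeasure d)).restrict
              ((Set.Ioc (0:ℝ) t) ×ˢ (Set.univ : Set (Sd d)))) :=
          (hco.mono (Set.prod_mono (fun x hx => le_of_lt hx.1) le_rfl)).aestronglyMeasurable
            (measurableSet_Ioc.prod MeasurableSet.univ)
        rw [← Measure.prod_restrict, Measure.restrict_univ] at h1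
        exact h1
      exact (hg_aesm.mul hplus_aesm).mul hminus_aesm
  -- Now conclude interval integrability via a constant bound.
  rw [intervalIntegrable_iff, Set.uIoc_of_le ht]
  have haesm' : AEStronglyMeasurable
      (fun τ => (Real.exp (-(t - τ)) : ℂ) * Gam g (φ τ) (q τ))
      (volume.restrict (Set.Ioc 0 t)) := by
    apply AEStronglyMeasurable.mul _ haesm
    apply Continuous.aestronglyMeasurable
    exact Complex.continuous_ofReal.comp (Real.continuous_exp.comp (by continuity))
  apply Integrable.mono' (integrable_const (1:ℝ)) haesm'
  rw [ae_restrict_iff' measurableSet_Ioc]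
  filter_upwards with τ hτ
  obtain ⟨hτ0, hτt⟩ := hτ
  have hφτ := hchar τ (le_of_lt hτ0)
  rw [norm_mul, Complex.norm_real, Real.norm_eq_abs, abs_of_nonneg (Real.exp_nonneg _)]
  calc Real.exp (-(t - τ)) * ‖Gam g (φ τ) (q τ)‖ ≤ 1 * 1 := by
        apply mul_le_mul _ (gam_norm_le hg_meas hg_nonneg hg_norm
          (norm_charFun_le_one hφτ) (continuous_of_isCharFun hφτ) (q τ)) (norm_nonneg _)
          zero_le_one
        exact Real.exp_le_one_iff.mpr (by linarith)
    _ = 1 := by ring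

/-! ### An explicit interval integral -/

lemma intInt_pow_div (θ : ℝ) (t : ℝ) (j : ℕ) :
    (∫ τ in (0:ℝ)..t, (θ * τ) ^ j / (j.factorial : ℝ))
      = θ ^ j / (j.factorial : ℝ) * (t ^ (j + 1) / (j + 1)) := by
  have heq : (fun τ : ℝ => (θ * τ) ^ j / (j.factorial : ℝ))
      = fun τ : ℝ => (θ ^ j / (j.factorial : ℝ)) * τ ^ j := by
    funext τ; rw [mul_pow]; ring
  rw [heq, intervalIntegral.integral_const_mul, integral_pow]
  have : (0:ℝ) ^ (j + 1) = 0 := zero_pow (Nat.succ_ne_zero j)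
  rw [this]
  push_cast
  ring

lemma bnd_intervalIntegrable (θ C : ℝ) (n : ℕ) (t : ℝ) :
    IntervalIntegrable (fun τ : ℝ => θ * C * (∑ j ∈ Finset.range n, (θ * τ) ^ j / (j.factorial : ℝ))
        + 4 * (2 * τ) ^ n / (n.factorial : ℝ)) volume 0 t := by
  apply Continuous.intervalIntegrable
  apply Continuous.add
  · apply continuous_const.mul
    apply continuous_finset_sum
    intro j _
    exact ((continuous_const.mul continuous_id).pow j).div_const _
  · exact (continuous_const.mul ((continuous_const.mul continuous_id).pow n)).div_const _

lemma integral_bnd (θ C : ℝ) (n : ℕ) (t : ℝ) :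
    (∫ τ in (0:ℝ)..t, (θ * C * (∑ j ∈ Finset.range n, (θ * τ) ^ j / (j.factorial : ℝ))
        + 4 * (2 * τ) ^ n / (n.factorial : ℝ)))
      = C * (∑ j ∈ Finset.range (n + 1), (θ * t) ^ j / (j.factorial : ℝ) - 1)
        + 2 * (2 * t) ^ (n + 1) / ((n + 1).factorial : ℝ) := by
  have hi1 : IntervalIntegrable
      (fun τ : ℝ => θ * C * (∑ j ∈ Finset.range n, (θ * τ) ^ j / (j.factorial : ℝ))) volume 0 t := by
    apply Continuous.intervalIntegrable
    apply continuous_const.mul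
    apply continuous_finset_sum
    intro j _
    exact ((continuous_const.mul continuous_id).pow j).div_const _
  have hi2 : IntervalIntegrable (fun τ : ℝ => 4 * (2 * τ) ^ n / (n.factorial : ℝ)) volume 0 t := by
    apply Continuous.intervalIntegrable
    exact (continuous_const.mul ((continuous_const.mul continuous_id).pow n)).div_const _
  rw [intervalIntegral.integral_add hi1 hi2]
  have h2 : (∫ τ in (0:ℝ)..t, 4 * (2 * τ) ^ n / (n.factorial : ℝ))
      = 2 * (2 * t) ^ (n + 1) / ((n + 1).factorial : ℝ) := by
    have heq : (fun τ : ℝ => 4 * (2 * τ) ^ n / (n.factorial : ℝ))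
        = fun τ : ℝ => (4 * 2 ^ n / (n.factorial : ℝ)) * τ ^ n := by
      funext τ; rw [mul_pow]; ring
    rw [heq, intervalIntegral.integral_const_mul, integral_pow]
    have hz : (0:ℝ) ^ (n + 1) = 0 := zero_pow (Nat.succ_ne_zero n)
    rw [hz, Nat.factorial_succ, mul_pow]
    have hn : ((n.factorial : ℝ)) ≠ 0 := Nat.cast_ne_zero.mpr (Nat.factorial_ne_zero n)
    have hn1 : ((n:ℝ) + 1) ≠ 0 := by positivity
    push_cast
    field_simp
    ring
  have h1 : (∫ τ in (0:ℝ)..t, θ * C * (∑ j ∈ Finset.range n, (θ * τ) ^ j / (j.factorial : ℝ)))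
      = C * (∑ j ∈ Finset.range (n + 1), (θ * t) ^ j / (j.factorial : ℝ) - 1) := by
    rw [intervalIntegral.integral_const_mul]
    have hswap : (∫ τ in (0:ℝ)..t, ∑ j ∈ Finset.range n, (θ * τ) ^ j / (j.factorial : ℝ))
        = ∑ j ∈ Finset.range n, ∫ τ in (0:ℝ)..t, (θ * τ) ^ j / (j.factorial : ℝ) := by
      apply intervalIntegral.integral_finset_sum
      intro j _
      apply Continuous.intervalIntegrable
      exact ((continuous_const.mul continuous_id).pow j).div_const _
    rw [hswap]
    have hsum : ∑ j ∈ Finset.range (n + 1), (θ * t) ^ j / (j.factorial : ℝ)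
        = (∑ j ∈ Finset.range n, (θ * t) ^ (j + 1) / ((j + 1).factorial : ℝ)) + 1 := by
      rw [Finset.sum_range_succ']
      simp
    rw [hsum]
    have : ∀ j ∈ Finset.range n,
        (∫ τ in (0:ℝ)..t, (θ * τ) ^ j / (j.factorial : ℝ))
          = θ ^ j / (j.factorial : ℝ) * (t ^ (j + 1) / (j + 1)) :=
      fun j _ => intInt_pow_div θ t j
    rw [Finset.sum_congr rfl this, add_sub_cancel_right, Finset.mul_sum, Finset.mul_sum]
    apply Finset.sum_congr rfl
    intro j _
    have hj : ((j.factorial : ℝ)) ≠ 0 := Nat.cast_ne_zero.mpr (Nat.factorial_ne_zero j)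
    have hj1 : ((j:ℝ) + 1) ≠ 0 := by positivity
    rw [Nat.factorial_succ, mul_pow]
    push_cast
    field_simp
    ring
  rw [h1, h2]

end Contraction

open Contraction

/-- Exponential contraction of two mild solutions whose initial data
    are tangent of order p at k = 0. -/
theorem mildSolutions_exponential_contraction (d : ℕ) (hd : 2 ≤ d)
    (g : ℝ → ℝ) (hg_meas : Measurable g) (hg_nonneg : ∀ x, 0 ≤ g x)
    (hg_norm : ∀ ω : Rd d, ‖ω‖ = 1 → ∫ n, g ⟪ω, (n : Rd d)⟫ ∂(sphMeasure d) = 1)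
    (A : Matrix (Fin d) (Fin d) ℝ)
    (p : ℝ) (hp : 0 < p)
    (lam : ℝ)
    (hlam : ∀ ω : Rd d, ‖ω‖ = 1 →
      (∫ n, g ⟪ω, (n : Rd d)⟫ *
          (1 - ((1 + ⟪ω, (n : Rd d)⟫) / 2) ^ (p / 2)
             - ((1 - ⟪ω, (n : Rd d)⟫) / 2) ^ (p / 2)) ∂(sphMeasure d)) = lam)
    (φ₁₀ φ₂₀ : Rd d → ℂ) (hφ₁₀ : IsCharFun φ₁₀) (hφ₂₀ : IsCharFun φ₂₀)
    (φ₁ φ₂ : ℝ → Rd d → ℂ)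
    (h₁ : IsMildSolution g A φ₁₀ φ₁) (h₂ : IsMildSolution g A φ₂₀ φ₂)
    (B : ℝ) (hB : 0 < B)
    (h0 : ∀ k : Rd d, ‖φ₁₀ k - φ₂₀ k‖ ≤ B * ‖k‖ ^ p) :
    ∀ t, 0 ≤ t → ∀ k : Rd d,
      ‖φ₁ t k - φ₂ t k‖ ≤ B * ‖k‖ ^ p * Real.exp (-(lam - p * opN A) * t) := by
  obtain ⟨hchar₁, hucont₁, heq₁⟩ := h₁
  obtain ⟨hchar₂, hucont₂, heq₂⟩ := h₂
  have hd0 : 0 < d := lt_of_lt_of_le two_pos hd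
  have hθ0 : 0 ≤ 1 - lam := one_sub_lam_nonneg hp hg_meas hg_nonneg hg_norm hlam hd0
  set a : ℝ := p * opN A with ha_def
  -- Key induction on the number of Duhamel iterations.
  have key : ∀ n : ℕ, ∀ t, 0 ≤ t → ∀ k : Rd d,
      ‖φ₁ t k - φ₂ t k‖ ≤ B * ‖k‖ ^ p * (Real.exp (-(1 - a) * t)
          * ∑ j ∈ Finset.range n, ((1 - lam) * t) ^ j / (j.factorial : ℝ))
        + 2 * (2 * t) ^ n / (n.factorial : ℝ) := by
    intro n
    induction n with
    | zero =>
      intro t ht k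
      have hb : ‖φ₁ t k - φ₂ t k‖ ≤ 2 := by
        calc ‖φ₁ t k - φ₂ t k‖ ≤ ‖φ₁ t k‖ + ‖φ₂ t k‖ := norm_sub_le _ _
          _ ≤ 1 + 1 := add_le_add (norm_charFun_le_one (hchar₁ t ht) k)
              (norm_charFun_le_one (hchar₂ t ht) k)
          _ = 2 := by norm_num
      simpa using hb
    | succ n IH =>
      intro t ht k
      set C : ℝ := B * ‖k‖ ^ p * Real.exp (-(1 - a) * t) with hC_def
      have hBk : 0 ≤ B * ‖k‖ ^ p := mul_nonneg hB.le (Real.rpow_nonneg (norm_nonneg _) _)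
      have hC0 : 0 ≤ C := mul_nonneg hBk (Real.exp_nonneg _)
      have hF1 := F_intervalIntegrable hg_meas hg_nonneg hg_norm A hchar₁ hucont₁ ht k
      have hF2 := F_intervalIntegrable hg_meas hg_nonneg hg_norm A hchar₂ hucont₂ ht k
      have hdiff : φ₁ t k - φ₂ t k
          = (Real.exp (-t) : ℂ) * (φ₁₀ (expA A (-t) k) - φ₂₀ (expA A (-t) k))
            + ∫ τ in (0:ℝ)..t,
                ((Real.exp (-(t - τ)) : ℂ) * Gam g (φ₁ τ) (expA A (-(t - τ)) k)
                  - (Real.exp (-(t - τ)) : ℂ) * Gam g (φ₂ τ) (expA A (-(t - τ)) k)) := by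
        rw [intervalIntegral.integral_sub hF1 hF2, heq₁ t ht k, heq₂ t ht k]
        ring
      -- the initial-data term
      have hnormq : ‖expA A (-t) k‖ ≤ Real.exp (t * opN A) * ‖k‖ := by
        have h := norm_expA_apply_le hd0 A (-t) k
        rwa [abs_neg, abs_of_nonneg ht] at h
      have hinit : ‖(Real.exp (-t) : ℂ) * (φ₁₀ (expA A (-t) k) - φ₂₀ (expA A (-t) k))‖ ≤ C := by
        rw [norm_mul, Complex.norm_real, Real.norm_eq_abs, abs_of_nonneg (Real.exp_nonneg _)]
        have hee : Real.exp (-t) * Real.exp (t * opN A * p) = Real.exp (-(1 - a) * t) := by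
          rw [← Real.exp_add]; congr 1; rw [ha_def]; ring
        calc Real.exp (-t) * ‖φ₁₀ (expA A (-t) k) - φ₂₀ (expA A (-t) k)‖
            ≤ Real.exp (-t) * (B * ‖expA A (-t) k‖ ^ p) :=
              mul_le_mul_of_nonneg_left (h0 _) (Real.exp_nonneg _)
          _ ≤ Real.exp (-t) * (B * (Real.exp (t * opN A) * ‖k‖) ^ p) := by
              apply mul_le_mul_of_nonneg_left _ (Real.exp_nonneg _)
              apply mul_le_mul_of_nonneg_left _ hB.le
              exact Real.rpow_le_rpow (norm_nonneg _) hnormq hp.le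
          _ = Real.exp (-t) * (B * (Real.exp (t * opN A * p) * ‖k‖ ^ p)) := by
              rw [Real.mul_rpow (Real.exp_nonneg _) (norm_nonneg _), ← Real.exp_mul]
          _ = B * ‖k‖ ^ p * (Real.exp (-t) * Real.exp (t * opN A * p)) := by ring
          _ = C := by rw [hee, hC_def]
      -- pointwise bound for the Duhamel integrand
      have hptw : ∀ τ ∈ Set.Icc (0:ℝ) t,
          ‖(Real.exp (-(t - τ)) : ℂ) * Gam g (φ₁ τ) (expA A (-(t - τ)) k)
            - (Real.exp (-(t - τ)) : ℂ) * Gam g (φ₂ τ) (expA A (-(t - τ)) k)‖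
          ≤ (1 - lam) * C * (∑ j ∈ Finset.range n, ((1 - lam) * τ) ^ j / (j.factorial : ℝ))
            + 4 * (2 * τ) ^ n / (n.factorial : ℝ) := by
        intro τ hτ
        obtain ⟨hτ0, hτt⟩ := hτ
        set q : Rd d := expA A (-(t - τ)) k with hq_def
        set S : ℝ := ∑ j ∈ Finset.range n, ((1 - lam) * τ) ^ j / (j.factorial : ℝ) with hS_def
        have hS0 : 0 ≤ S := Finset.sum_nonneg fun j _ =>
          div_nonneg (pow_nonneg (mul_nonneg hθ0 hτ0) j) (Nat.cast_nonneg _)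
        set M : ℝ := B * (Real.exp (-(1 - a) * τ) * S) with hM_def
        have hM0 : 0 ≤ M := mul_nonneg hB.le (mul_nonneg (Real.exp_nonneg _) hS0)
        set c : ℝ := 2 * (2 * τ) ^ n / (n.factorial : ℝ) with hc_def
        have hc0 : 0 ≤ c := by
          apply div_nonneg _ (Nat.cast_nonneg _)
          have : (0:ℝ) ≤ 2 * τ := by linarith
          positivity
        have hβ : ∀ x : Rd d, ‖φ₁ τ x - φ₂ τ x‖ ≤ M * ‖x‖ ^ p + c := by
          intro x
          refine le_trans (IH τ hτ0 x) (le_of_eq ?_)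
          rw [hM_def, hc_def]
          ring
        have hφτ₁ := hchar₁ τ hτ0
        have hφτ₂ := hchar₂ τ hτ0
        have hgam := gam_diff_le hp hg_meas hg_nonneg hg_norm hlam
          (norm_charFun_le_one hφτ₁) (norm_charFun_le_one hφτ₂)
          (continuous_of_isCharFun hφτ₁) (continuous_of_isCharFun hφτ₂) hM0 hc0 hβ q
        have httau : (0:ℝ) ≤ t - τ := by linarith
        have hqb : ‖q‖ ^ p ≤ Real.exp (a * (t - τ)) * ‖k‖ ^ p := by
          have h1 := norm_expA_apply_le hd0 A (-(t - τ)) k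
          rw [abs_neg, abs_of_nonneg httau] at h1
          have harg : (t - τ) * opN A * p = a * (t - τ) := by rw [ha_def]; ring
          calc ‖q‖ ^ p ≤ (Real.exp ((t - τ) * opN A) * ‖k‖) ^ p :=
                Real.rpow_le_rpow (norm_nonneg _) h1 hp.le
            _ = Real.exp ((t - τ) * opN A * p) * ‖k‖ ^ p := by
                rw [Real.mul_rpow (Real.exp_nonneg _) (norm_nonneg _), ← Real.exp_mul]
            _ = Real.exp (a * (t - τ)) * ‖k‖ ^ p := by rw [harg]
        have hee2 : Real.exp (-(t - τ)) * Real.exp (-(1 - a) * τ) * Real.exp (a * (t - τ))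
            = Real.exp (-(1 - a) * t) := by
          rw [← Real.exp_add, ← Real.exp_add]; congr 1; ring
        have heq2 : Real.exp (-(t - τ)) * (M * (1 - lam) * (Real.exp (a * (t - τ)) * ‖k‖ ^ p))
            = (1 - lam) * C * S := by
          rw [hM_def, hC_def, ← hee2]; ring
        have hstep1 : Real.exp (-(t - τ)) * (M * (1 - lam) * ‖q‖ ^ p)
            ≤ (1 - lam) * C * S := by
          rw [← heq2]
          apply mul_le_mul_of_nonneg_left _ (Real.exp_nonneg _)
          exact mul_le_mul_of_nonneg_left hqb (mul_nonneg hM0 hθ0)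
        have hstep2 : Real.exp (-(t - τ)) * (2 * c) ≤ 2 * c := by
          apply mul_le_of_le_one_left (by linarith)
          exact Real.exp_le_one_iff.mpr (by linarith)
        have hfc : 2 * c = 4 * (2 * τ) ^ n / (n.factorial : ℝ) := by rw [hc_def]; ring
        calc ‖(Real.exp (-(t - τ)) : ℂ) * Gam g (φ₁ τ) q
              - (Real.exp (-(t - τ)) : ℂ) * Gam g (φ₂ τ) q‖
            = Real.exp (-(t - τ)) * ‖Gam g (φ₁ τ) q - Gam g (φ₂ τ) q‖ := by
              rw [← mul_sub, norm_mul, Complex.norm_real, Real.norm_eq_abs,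
                abs_of_nonneg (Real.exp_nonneg _)]
          _ ≤ Real.exp (-(t - τ)) * (M * (1 - lam) * ‖q‖ ^ p + 2 * c) :=
              mul_le_mul_of_nonneg_left hgam (Real.exp_nonneg _)
          _ = Real.exp (-(t - τ)) * (M * (1 - lam) * ‖q‖ ^ p)
              + Real.exp (-(t - τ)) * (2 * c) := by ring
          _ ≤ (1 - lam) * C * S + 2 * c := add_le_add hstep1 hstep2
          _ = (1 - lam) * C * S + 4 * (2 * τ) ^ n / (n.factorial : ℝ) := by rw [hfc]
      -- bound the integral
      have hIbd : ‖∫ τ in (0:ℝ)..t,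
            ((Real.exp (-(t - τ)) : ℂ) * Gam g (φ₁ τ) (expA A (-(t - τ)) k)
              - (Real.exp (-(t - τ)) : ℂ) * Gam g (φ₂ τ) (expA A (-(t - τ)) k))‖
          ≤ C * (∑ j ∈ Finset.range (n + 1), ((1 - lam) * t) ^ j / (j.factorial : ℝ) - 1)
            + 2 * (2 * t) ^ (n + 1) / ((n + 1).factorial : ℝ) := by
        calc ‖∫ τ in (0:ℝ)..t,
              ((Real.exp (-(t - τ)) : ℂ) * Gam g (φ₁ τ) (expA A (-(t - τ)) k)
                - (Real.exp (-(t - τ)) : ℂ) * Gam g (φ₂ τ) (expA A (-(t - τ)) k))‖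
            ≤ ∫ τ in (0:ℝ)..t,
                ‖(Real.exp (-(t - τ)) : ℂ) * Gam g (φ₁ τ) (expA A (-(t - τ)) k)
                  - (Real.exp (-(t - τ)) : ℂ) * Gam g (φ₂ τ) (expA A (-(t - τ)) k)‖ :=
              intervalIntegral.norm_integral_le_integral_norm ht
          _ ≤ ∫ τ in (0:ℝ)..t,
                ((1 - lam) * C * (∑ j ∈ Finset.range n, ((1 - lam) * τ) ^ j / (j.factorial : ℝ))
                  + 4 * (2 * τ) ^ n / (n.factorial : ℝ)) :=
              intervalIntegral.integral_mono_on ht (hF1.sub hF2).norm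
                (bnd_intervalIntegrable (1 - lam) C n t) hptw
          _ = C * (∑ j ∈ Finset.range (n + 1), ((1 - lam) * t) ^ j / (j.factorial : ℝ) - 1)
              + 2 * (2 * t) ^ (n + 1) / ((n + 1).factorial : ℝ) :=
              integral_bnd (1 - lam) C n t
      calc ‖φ₁ t k - φ₂ t k‖
          ≤ ‖(Real.exp (-t) : ℂ) * (φ₁₀ (expA A (-t) k) - φ₂₀ (expA A (-t) k))‖
            + ‖∫ τ in (0:ℝ)..t,
                ((Real.exp (-(t - τ)) : ℂ) * Gam g (φ₁ τ) (expA A (-(t - τ)) k)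
                  - (Real.exp (-(t - τ)) : ℂ) * Gam g (φ₂ τ) (expA A (-(t - τ)) k))‖ := by
            rw [hdiff]; exact norm_add_le _ _
        _ ≤ C + (C * (∑ j ∈ Finset.range (n + 1), ((1 - lam) * t) ^ j / (j.factorial : ℝ) - 1)
              + 2 * (2 * t) ^ (n + 1) / ((n + 1).factorial : ℝ)) := add_le_add hinit hIbd
        _ = B * ‖k‖ ^ p * (Real.exp (-(1 - a) * t)
              * ∑ j ∈ Finset.range (n + 1), ((1 - lam) * t) ^ j / (j.factorial : ℝ))
            + 2 * (2 * t) ^ (n + 1) / ((n + 1).factorial : ℝ) := by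
            rw [hC_def]; ring
  -- pass to the limit
  intro t ht k
  have hBk : 0 ≤ B * ‖k‖ ^ p := mul_nonneg hB.le (Real.rpow_nonneg (norm_nonneg _) _)
  have hee3 : Real.exp (-(1 - a) * t) * Real.exp ((1 - lam) * t) = Real.exp (-(lam - a) * t) := by
    rw [← Real.exp_add]; congr 1; ring
  have hfin : ∀ n : ℕ, ‖φ₁ t k - φ₂ t k‖
      ≤ B * ‖k‖ ^ p * Real.exp (-(lam - a) * t) + 2 * (2 * t) ^ n / (n.factorial : ℝ) := by
    intro n
    refine le_trans (key n t ht k) ?_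
    have hsum : (∑ j ∈ Finset.range n, ((1 - lam) * t) ^ j / (j.factorial : ℝ))
        ≤ Real.exp ((1 - lam) * t) :=
      Real.sum_le_exp_of_nonneg (mul_nonneg hθ0 ht) n
    have h1 : B * ‖k‖ ^ p * (Real.exp (-(1 - a) * t)
          * ∑ j ∈ Finset.range n, ((1 - lam) * t) ^ j / (j.factorial : ℝ))
        ≤ B * ‖k‖ ^ p * Real.exp (-(lam - a) * t) := by
      rw [← hee3,
        show B * ‖k‖ ^ p * (Real.exp (-(1 - a) * t) * Real.exp ((1 - lam) * t))
          = B * ‖k‖ ^ p * Real.exp (-(1 - a) * t) * Real.exp ((1 - lam) * t) from by ring,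
        show B * ‖k‖ ^ p * (Real.exp (-(1 - a) * t)
            * ∑ j ∈ Finset.range n, ((1 - lam) * t) ^ j / (j.factorial : ℝ))
          = B * ‖k‖ ^ p * Real.exp (-(1 - a) * t)
            * ∑ j ∈ Finset.range n, ((1 - lam) * t) ^ j / (j.factorial : ℝ) from by ring]
      apply mul_le_mul_of_nonneg_left hsum
      exact mul_nonneg hBk (Real.exp_nonneg _)
    linarith
  have htend : Filter.Tendsto
      (fun n : ℕ => B * ‖k‖ ^ p * Real.exp (-(lam - a) * t) + 2 * (2 * t) ^ n / (n.factorial : ℝ))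
      Filter.atTop (nhds (B * ‖k‖ ^ p * Real.exp (-(lam - a) * t))) := by
    have h2 : Filter.Tendsto (fun n : ℕ => (2 * t) ^ n / (n.factorial : ℝ))
        Filter.atTop (nhds 0) := FloorSemiring.tendsto_pow_div_factorial_atTop (2 * t)
    have h3 : Filter.Tendsto (fun n : ℕ => 2 * ((2 * t) ^ n / (n.factorial : ℝ)))
        Filter.atTop (nhds (2 * 0)) := h2.const_mul 2
    have hconst : Filter.Tendsto (fun _ : ℕ => B * ‖k‖ ^ p * Real.exp (-(lam - a) * t))
        Filter.atTop (nhds (B * ‖k‖ ^ p * Real.exp (-(lam - a) * t))) := tendsto_const_nhds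
    have h4 := hconst.add h3
    simp only [mul_zero, add_zero] at h4
    refine h4.congr (fun n => ?_)
    ring
  exact ge_of_tendsto htend (Filter.Eventually.of_forall hfin)


end
end
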